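/- arXiv:1811.07855 — 9 statements merged into one kernel-verified Lean document; each statement's English description precedes it below -/
import Mathlib

section
/- Let H be a real inner product space and let p ≥ 2 be a real number. There exists a constant C_p, depending only on p, such that for all x, y ∈ H: | ‖x + y‖^p − ‖x‖^p − p·‖x‖^{p−2}·⟨x, y⟩ | ≤ C_p·( ‖x‖^{p−2}·‖y‖^2 + ‖y‖^p ). -/
open Real Set

/-- Lipschitz bound for `w ^ (q-1)` near `1`. -/
private lemma aux_lip (q : ℝ) (hq : 1 ≤ q) {w : ℝ} (hw1 : 1/4 ≤ w) (hw2 : w ≤ 9/4) :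
    |w ^ (q - 1) - 1| ≤ ((q - 1) * 16 * 4 ^ q) * |w - 1| := by
  have h4q : (0:ℝ) < 4 ^ q := Real.rpow_pos_of_pos (by norm_num) q
  have hderiv : ∀ u ∈ Icc (1/4 : ℝ) (9/4),
      HasDerivWithinAt (fun u : ℝ => u ^ (q - 1)) ((q - 1) * u ^ (q - 1 - 1))
        (Icc (1/4 : ℝ) (9/4)) u := by
    intro u hu
    have hu0 : u ≠ 0 := by
      have : (1/4 : ℝ) ≤ u := hu.1
      positivity
    exact (Real.hasDerivAt_rpow_const (Or.inl hu0)).hasDerivWithinAt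
  have hbound : ∀ u ∈ Icc (1/4 : ℝ) (9/4),
      ‖(q - 1) * u ^ (q - 1 - 1)‖ ≤ (q - 1) * 16 * 4 ^ q := by
    intro u hu
    have hu0 : (0:ℝ) < u := lt_of_lt_of_le (by norm_num) hu.1
    have h1 : u ^ (q - 1 - 1) = u ^ q / u ^ (2:ℝ) := by
      rw [show q - 1 - 1 = q - 2 by ring, Real.rpow_sub hu0]
    have h2 : u ^ q ≤ 4 ^ q :=
      Real.rpow_le_rpow hu0.le (by linarith [hu.2]) (by linarith)
    have h3 : (1/16 : ℝ) ≤ u ^ (2:ℝ) := by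
      rw [Real.rpow_two]
      nlinarith [hu.1]
    have h4 : u ^ (q - 1 - 1) ≤ 4 ^ q * 16 := by
      rw [h1, div_le_iff₀ (by positivity)]
      nlinarith
    have h5 : (0:ℝ) ≤ u ^ (q - 1 - 1) := Real.rpow_nonneg hu0.le _
    rw [Real.norm_eq_abs, abs_mul, abs_of_nonneg (by linarith : (0:ℝ) ≤ q - 1),
      abs_of_nonneg h5]
    calc (q - 1) * u ^ (q - 1 - 1) ≤ (q - 1) * (4 ^ q * 16) := by nlinarith
      _ = (q - 1) * 16 * 4 ^ q := by ring
  have key := (convex_Icc (1/4 : ℝ) (9/4)).norm_image_sub_le_of_norm_hasDerivWithin_le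
    hderiv hbound (x := 1) (y := w) ⟨by norm_num, by norm_num⟩ ⟨hw1, hw2⟩
  simpa [Real.one_rpow, Real.norm_eq_abs] using key

/-- Quadratic Taylor estimate for `v ^ q` near `1`. -/
private lemma aux_taylor (q : ℝ) (hq : 1 ≤ q) {v : ℝ} (hv1 : 1/4 ≤ v) (hv2 : v ≤ 9/4) :
    |v ^ q - 1 - q * (v - 1)| ≤ (q * ((q - 1) * 16 * 4 ^ q)) * (v - 1) ^ 2 := by
  set L : ℝ := (q - 1) * 16 * 4 ^ q with hL
  have hL0 : 0 ≤ L := by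
    have h1 : (0:ℝ) < 4 ^ q := Real.rpow_pos_of_pos (by norm_num) q
    have h2 : (0:ℝ) ≤ q - 1 := by linarith
    positivity
  have hsub : uIcc (1:ℝ) v ⊆ Icc (1/4 : ℝ) (9/4) := by
    apply uIcc_subset_Icc ⟨by norm_num, by norm_num⟩ ⟨hv1, hv2⟩
  have hderiv : ∀ u ∈ uIcc (1:ℝ) v,
      HasDerivWithinAt (fun u : ℝ => u ^ q - q * u) (q * u ^ (q - 1) - q)
        (uIcc (1:ℝ) v) u := by
    intro u hu
    have hu' := hsub hu
    have hu0 : u ≠ 0 := by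
      have : (1/4 : ℝ) ≤ u := hu'.1
      positivity
    have := (Real.hasDerivAt_rpow_const (p := q) (Or.inl hu0)).sub ((hasDerivAt_id u).const_mul q)
    simp only [mul_one] at this
    exact this.hasDerivWithinAt
  have hbound : ∀ u ∈ uIcc (1:ℝ) v, ‖q * u ^ (q - 1) - q‖ ≤ q * L * |v - 1| := by
    intro u hu
    have hu' := hsub hu
    have h1 : |u ^ (q - 1) - 1| ≤ L * |u - 1| := aux_lip q hq hu'.1 hu'.2
    have h2 : |u - 1| ≤ |v - 1| := by
      rcases le_total (1:ℝ) v with h | h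
      · rw [uIcc_of_le h] at hu
        rw [abs_of_nonneg (by linarith [hu.1]), abs_of_nonneg (by linarith)]
        linarith [hu.2]
      · rw [uIcc_of_ge h] at hu
        rw [abs_of_nonpos (by linarith [hu.2]), abs_of_nonpos (by linarith)]
        linarith [hu.1]
    have h3 : ‖q * u ^ (q - 1) - q‖ = q * |u ^ (q - 1) - 1| := by
      rw [Real.norm_eq_abs, show q * u ^ (q - 1) - q = q * (u ^ (q - 1) - 1) by ring,
        abs_mul, abs_of_nonneg (by linarith : (0:ℝ) ≤ q)]
    rw [h3]
    calc q * |u ^ (q - 1) - 1| ≤ q * (L * |u - 1|) :=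
          mul_le_mul_of_nonneg_left h1 (by linarith)
      _ = q * L * |u - 1| := by ring
      _ ≤ q * L * |v - 1| := mul_le_mul_of_nonneg_left h2 (mul_nonneg (by linarith) hL0)
  have key := (convex_uIcc (1:ℝ) v).norm_image_sub_le_of_norm_hasDerivWithin_le
    hderiv hbound (x := 1) (y := v) left_mem_uIcc right_mem_uIcc
  have h1 : (fun u : ℝ => u ^ q - q * u) v - (fun u : ℝ => u ^ q - q * u) 1
      = v ^ q - 1 - q * (v - 1) := by
    simp only [Real.one_rpow]; ring
  rw [h1, Real.norm_eq_abs, Real.norm_eq_abs] at key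
  calc |v ^ q - 1 - q * (v - 1)| ≤ q * L * |v - 1| * |v - 1| := key
    _ = q * L * ((v - 1) * (v - 1)) := by
        rw [mul_assoc, ← abs_mul, abs_of_nonneg (mul_self_nonneg _)]
    _ = (q * L) * (v - 1) ^ 2 := by ring

set_option maxHeartbeats 400000 in
/-- Taylor-type estimate for the `p`-th power of the norm in a real inner
product space: there is a constant `C` depending only on `p ≥ 2` such that
`|‖x+y‖^p − ‖x‖^p − p‖x‖^{p-2}⟨x,y⟩| ≤ C(‖x‖^{p-2}‖y‖^2 + ‖y‖^p)`. -/
theorem norm_pow_taylor_estimate (p : ℝ) (hp : 2 ≤ p) :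
    ∃ C : ℝ, ∀ (H : Type*) [NormedAddCommGroup H] [InnerProductSpace ℝ H] (x y : H),
      |‖x + y‖ ^ p - ‖x‖ ^ p - p * ‖x‖ ^ (p - 2) * (inner ℝ x y : ℝ)| ≤
        C * (‖x‖ ^ (p - 2) * ‖y‖ ^ (2 : ℝ) + ‖y‖ ^ p) := by
  set q : ℝ := p / 2 with hqdef
  have hq : 1 ≤ q := by rw [hqdef]; linarith
  set K : ℝ := q * ((q - 1) * 16 * 4 ^ q) with hK
  have hK0 : 0 ≤ K := by
    have h1 : (0:ℝ) < 4 ^ q := Real.rpow_pos_of_pos (by norm_num) q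
    have h2 : (0:ℝ) ≤ q - 1 := by linarith
    have h3 : (0:ℝ) ≤ q := by linarith
    positivity
  have h3p : (0:ℝ) < 3 ^ p := Real.rpow_pos_of_pos (by norm_num) p
  have h2p : (0:ℝ) < 2 ^ p := Real.rpow_pos_of_pos (by norm_num) p
  have h2p1 : (0:ℝ) < 2 ^ (p - 1) := Real.rpow_pos_of_pos (by norm_num) (p - 1)
  refine ⟨25 * K / 4 + p / 2 + 3 ^ p + 2 ^ p + p * 2 ^ (p - 1) + 1, ?_⟩
  intro H _ _ x y
  set a : ℝ := ‖x‖ with ha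
  set b : ℝ := ‖y‖ with hb
  set t : ℝ := (inner ℝ x y : ℝ) with ht
  have ha0 : 0 ≤ a := norm_nonneg x
  have hb0 : 0 ≤ b := norm_nonneg y
  have htab : |t| ≤ a * b := abs_real_inner_le_norm x y
  have hr2 : ∀ c : ℝ, c ^ (2:ℝ) = c ^ 2 := Real.rpow_two
  have hp2p1 : (0:ℝ) ≤ p * 2 ^ (p - 1) := by positivity
  have hC0 : (0:ℝ) ≤ 25 * K / 4 + p / 2 + 3 ^ p + 2 ^ p + p * 2 ^ (p - 1) + 1 := by
    linarith
  have hap2' : (0:ℝ) ≤ a ^ (p - 2) := Real.rpow_nonneg ha0 _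
  have hRHS1 : (0:ℝ) ≤ a ^ (p - 2) * b ^ (2:ℝ) := by positivity
  have hbp : (0:ℝ) ≤ b ^ p := Real.rpow_nonneg hb0 p
  rcases eq_or_lt_of_le ha0 with hA | hA
  · -- x = 0
    have hx0 : x = 0 := by
      rw [← norm_eq_zero, ← ha, ← hA]
    have ht0 : t = 0 := by rw [ht, hx0]; exact inner_zero_left y
    have hxy : ‖x + y‖ = b := by rw [hx0, zero_add]
    have hap : a ^ p = 0 := by
      rw [← hA]; exact Real.zero_rpow (by linarith)
    rw [ht0, hxy, hap, mul_zero, sub_zero, sub_zero, abs_of_nonneg hbp]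
    have hC1 : (1:ℝ) ≤ 25 * K / 4 + p / 2 + 3 ^ p + 2 ^ p + p * 2 ^ (p - 1) + 1 := by
      linarith
    calc b ^ p = 1 * b ^ p := (one_mul _).symm
      _ ≤ (25 * K / 4 + p / 2 + 3 ^ p + 2 ^ p + p * 2 ^ (p - 1) + 1) * b ^ p :=
          mul_le_mul_of_nonneg_right hC1 hbp
      _ ≤ (25 * K / 4 + p / 2 + 3 ^ p + 2 ^ p + p * 2 ^ (p - 1) + 1)
          * (a ^ (p - 2) * b ^ (2:ℝ) + b ^ p) :=
          mul_le_mul_of_nonneg_left (by linarith) hC0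
  · -- a > 0
    rcases lt_or_ge a (2 * b) with hcase | hcase
    · -- small x relative to y: crude bound
      have hb0' : 0 < b := by linarith
      have h1 : ‖x + y‖ ^ p ≤ 3 ^ p * b ^ p := by
        rw [← Real.mul_rpow (by norm_num) hb0]
        apply Real.rpow_le_rpow (norm_nonneg _) _ (by linarith)
        calc ‖x + y‖ ≤ a + b := norm_add_le x y
          _ ≤ 3 * b := by linarith
      have h2 : a ^ p ≤ 2 ^ p * b ^ p := by
        rw [← Real.mul_rpow (by norm_num) hb0]
        exact Real.rpow_le_rpow ha0 (by linarith) (by linarith)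
      have h3 : p * a ^ (p - 2) * |t| ≤ p * 2 ^ (p - 1) * b ^ p := by
        have e1 : a ^ (p - 2) * (a * b) = a ^ (p - 1) * b := by
          rw [show p - 1 = p - 2 + 1 by ring, Real.rpow_add hA, Real.rpow_one]; ring
        have e2 : a ^ (p - 1) ≤ 2 ^ (p - 1) * b ^ (p - 1) := by
          rw [← Real.mul_rpow (by norm_num) hb0]
          exact Real.rpow_le_rpow ha0 (by linarith) (by linarith)
        have e3 : b ^ (p - 1) * b = b ^ p := by
          rw [Real.rpow_sub hb0', Real.rpow_one]
          field_simp
        have hpa : (0:ℝ) ≤ p * a ^ (p - 2) := mul_nonneg (by linarith) hap2'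
        calc p * a ^ (p - 2) * |t| ≤ p * a ^ (p - 2) * (a * b) :=
              mul_le_mul_of_nonneg_left htab hpa
          _ = p * (a ^ (p - 1) * b) := by rw [mul_assoc, e1]
          _ ≤ p * (2 ^ (p - 1) * b ^ (p - 1) * b) :=
              mul_le_mul_of_nonneg_left (mul_le_mul_of_nonneg_right e2 hb0) (by linarith)
          _ = p * 2 ^ (p - 1) * b ^ p := by rw [mul_assoc (2 ^ (p - 1)), e3]; ring
      have hxyp : (0:ℝ) ≤ ‖x + y‖ ^ p := Real.rpow_nonneg (norm_nonneg _) p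
      have hap : (0:ℝ) ≤ a ^ p := Real.rpow_nonneg ha0 p
      have h4 : (0:ℝ) ≤ p * a ^ (p - 2) := mul_nonneg (by linarith) hap2'
      have habs : |‖x + y‖ ^ p - a ^ p - p * a ^ (p - 2) * t| ≤
          ‖x + y‖ ^ p + a ^ p + p * a ^ (p - 2) * |t| := by
        calc |‖x + y‖ ^ p - a ^ p - p * a ^ (p - 2) * t|
            ≤ |‖x + y‖ ^ p - a ^ p| + |p * a ^ (p - 2) * t| := abs_sub _ _
          _ ≤ (|‖x + y‖ ^ p| + |a ^ p|) + |p * a ^ (p - 2) * t| :=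
              add_le_add (abs_sub _ _) le_rfl
          _ = ‖x + y‖ ^ p + a ^ p + p * a ^ (p - 2) * |t| := by
              rw [abs_of_nonneg hxyp, abs_of_nonneg hap, abs_mul, abs_of_nonneg h4]
      calc |‖x + y‖ ^ p - a ^ p - p * a ^ (p - 2) * t|
          ≤ ‖x + y‖ ^ p + a ^ p + p * a ^ (p - 2) * |t| := habs
        _ ≤ 3 ^ p * b ^ p + 2 ^ p * b ^ p + p * 2 ^ (p - 1) * b ^ p := by linarith
        _ = (3 ^ p + 2 ^ p + p * 2 ^ (p - 1)) * b ^ p := by ring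
        _ ≤ (25 * K / 4 + p / 2 + 3 ^ p + 2 ^ p + p * 2 ^ (p - 1) + 1) * b ^ p :=
            mul_le_mul_of_nonneg_right (by linarith) hbp
        _ ≤ (25 * K / 4 + p / 2 + 3 ^ p + 2 ^ p + p * 2 ^ (p - 1) + 1)
            * (a ^ (p - 2) * b ^ (2:ℝ) + b ^ p) :=
            mul_le_mul_of_nonneg_left (by linarith) hC0
    · -- main case: b ≤ a/2
      set n : ℝ := ‖x + y‖ with hn
      have hn0 : 0 ≤ n := norm_nonneg _
      have hnl : a - b ≤ n := by
        have h : a ≤ n + b := by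
          calc a = ‖(x + y) + (-y)‖ := by rw [ha]; congr 1; abel
            _ ≤ n + b := by rw [hn, hb]; simpa using norm_add_le (x + y) (-y)
        linarith
      have hnu : n ≤ a + b := norm_add_le x y
      have hsq : n ^ 2 = a ^ 2 + 2 * t + b ^ 2 := norm_add_sq_real x y
      set v : ℝ := n ^ 2 / a ^ 2 with hv
      have ha2 : (0:ℝ) < a ^ 2 := by positivity
      have hn2 : a / 2 ≤ n := by linarith
      have hn3 : n ≤ 3 / 2 * a := by linarith
      have hv1 : 1/4 ≤ v := by
        rw [hv, le_div_iff₀ ha2]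
        have h := mul_le_mul hn2 hn2 (by linarith : (0:ℝ) ≤ a / 2) hn0
        calc 1 / 4 * a ^ 2 = a / 2 * (a / 2) := by ring
          _ ≤ n * n := h
          _ = n ^ 2 := by ring
      have hv2 : v ≤ 9/4 := by
        rw [hv, div_le_iff₀ ha2]
        have h := mul_le_mul hn3 hn3 hn0 (by linarith : (0:ℝ) ≤ 3 / 2 * a)
        calc n ^ 2 = n * n := by ring
          _ ≤ 3 / 2 * a * (3 / 2 * a) := h
          _ = 9 / 4 * a ^ 2 := by ring
      have htay := aux_taylor q hq hv1 hv2
      rw [← hK] at htay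
      have hap : (0:ℝ) < a ^ p := Real.rpow_pos_of_pos hA p
      have hap2 : (0:ℝ) < a ^ (p - 2) := Real.rpow_pos_of_pos hA _
      have hvq : a ^ p * v ^ q = n ^ p := by
        have h1 : v = (n / a) ^ (2:ℝ) := by
          rw [hv, hr2, div_pow]
        have h2 : v ^ q = (n / a) ^ p := by
          rw [h1, ← Real.rpow_mul (by positivity), show (2:ℝ) * q = p by rw [hqdef]; ring]
        rw [h2, Real.div_rpow hn0 ha0]
        field_simp
      have ea : a ^ p = a ^ (p - 2) * a ^ 2 := by
        rw [show p = p - 2 + 2 by ring, Real.rpow_add hA, hr2]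
        ring_nf
      have evm1 : v - 1 = (2 * t + b ^ 2) / a ^ 2 := by
        rw [hv, hsq]; field_simp; ring
      have elin : a ^ p * (q * (v - 1)) = p * a ^ (p - 2) * t + p / 2 * a ^ (p - 2) * b ^ 2 := by
        rw [evm1, ea, hqdef]
        field_simp
      have equad : a ^ p * (v - 1) ^ 2 ≤ 25 / 4 * (a ^ (p - 2) * b ^ 2) := by
        have h1 : |2 * t + b ^ 2| ≤ 5 / 2 * (a * b) := by
          have h1a : |2 * t| ≤ 2 * (a * b) := by
            rw [abs_mul, abs_two]; linarith
          have h1b : b ^ 2 ≤ a * b / 2 := by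
            have h := mul_le_mul_of_nonneg_right hcase hb0
            calc b ^ 2 = 2 * b * b / 2 := by ring
              _ ≤ a * b / 2 := by linarith
          calc |2 * t + b ^ 2| ≤ |2 * t| + |b ^ 2| := abs_add_le _ _
            _ ≤ 2 * (a * b) + a * b / 2 := by
                rw [abs_of_nonneg (by positivity : (0:ℝ) ≤ b ^ 2)]; linarith
            _ = 5 / 2 * (a * b) := by ring
        have h2 : (2 * t + b ^ 2) ^ 2 ≤ 25 / 4 * (a ^ 2 * b ^ 2) := by
          have h := mul_self_le_mul_self (abs_nonneg (2 * t + b ^ 2)) h1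
          calc (2 * t + b ^ 2) ^ 2 = |2 * t + b ^ 2| * |2 * t + b ^ 2| := by
                rw [abs_mul_abs_self]; ring
            _ ≤ 5 / 2 * (a * b) * (5 / 2 * (a * b)) := h
            _ = 25 / 4 * (a ^ 2 * b ^ 2) := by ring
        have h3 : a ^ p * (v - 1) ^ 2 = a ^ (p - 2) * ((2 * t + b ^ 2) ^ 2 / a ^ 2) := by
          rw [evm1, ea, div_pow]
          field_simp
        rw [h3]
        calc a ^ (p - 2) * ((2 * t + b ^ 2) ^ 2 / a ^ 2)
            ≤ a ^ (p - 2) * (25 / 4 * b ^ 2) := by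
              apply mul_le_mul_of_nonneg_left _ hap2.le
              rw [div_le_iff₀ ha2]; linarith
          _ = 25 / 4 * (a ^ (p - 2) * b ^ 2) := by ring
      have hmain : |n ^ p - a ^ p - p * a ^ (p - 2) * t - p / 2 * a ^ (p - 2) * b ^ 2|
          ≤ K * (25 / 4 * (a ^ (p - 2) * b ^ 2)) := by
        have h0 : n ^ p - a ^ p - p * a ^ (p - 2) * t - p / 2 * a ^ (p - 2) * b ^ 2
            = a ^ p * (v ^ q - 1 - q * (v - 1)) := by
          rw [mul_sub, mul_sub, hvq, mul_one, elin]; ring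
        rw [h0, abs_mul, abs_of_nonneg hap.le]
        calc a ^ p * |v ^ q - 1 - q * (v - 1)| ≤ a ^ p * (K * (v - 1) ^ 2) :=
              mul_le_mul_of_nonneg_left htay hap.le
          _ = K * (a ^ p * (v - 1) ^ 2) := by ring
          _ ≤ K * (25 / 4 * (a ^ (p - 2) * b ^ 2)) := mul_le_mul_of_nonneg_left equad hK0
      rw [hr2 b]
      have hfin : |n ^ p - a ^ p - p * a ^ (p - 2) * t|
          ≤ (25 * K / 4 + p / 2) * (a ^ (p - 2) * b ^ 2) := by
        have habs2 : |p / 2 * a ^ (p - 2) * b ^ 2| = p / 2 * a ^ (p - 2) * b ^ 2 := by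
          rw [abs_of_nonneg]; positivity
        calc |n ^ p - a ^ p - p * a ^ (p - 2) * t|
            = |(n ^ p - a ^ p - p * a ^ (p - 2) * t - p / 2 * a ^ (p - 2) * b ^ 2)
                + p / 2 * a ^ (p - 2) * b ^ 2| := by ring_nf
          _ ≤ |n ^ p - a ^ p - p * a ^ (p - 2) * t - p / 2 * a ^ (p - 2) * b ^ 2|
                + |p / 2 * a ^ (p - 2) * b ^ 2| := abs_add_le _ _
          _ ≤ K * (25 / 4 * (a ^ (p - 2) * b ^ 2)) + p / 2 * a ^ (p - 2) * b ^ 2 := by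
              rw [habs2]; linarith [hmain]
          _ = (25 * K / 4 + p / 2) * (a ^ (p - 2) * b ^ 2) := by ring
      calc |n ^ p - a ^ p - p * a ^ (p - 2) * t|
          ≤ (25 * K / 4 + p / 2) * (a ^ (p - 2) * b ^ 2) := hfin
        _ ≤ (25 * K / 4 + p / 2 + 3 ^ p + 2 ^ p + p * 2 ^ (p - 1) + 1)
            * (a ^ (p - 2) * b ^ 2 + b ^ p) := by
            apply mul_le_mul (by linarith) (by linarith)
              (mul_nonneg hap2.le (sq_nonneg b)) hC0
end

section
/- For every real number r ≥ 0 and all real numbers a, b: (|a|^r·a − |b|^r·b)·(a − b) ≥ 2^{−r}·|a − b|^{r+2}. -/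
open scoped NNReal

private lemma rpow_mul_self_aux {x : ℝ} (hx : 0 ≤ x) (r : ℝ) (hr : 0 ≤ r) :
    x ^ r * x = x ^ (r + 1) := by
  rcases eq_or_lt_of_le hx with h | h
  · subst h
    rw [mul_zero, Real.zero_rpow (by linarith : r + 1 ≠ 0)]
  · rw [Real.rpow_add_one h.ne']

private lemma aux1 (p x y : ℝ) (hp : 1 ≤ p) (hx : 0 ≤ x) (hy : 0 ≤ y) :
    (x + y) ^ p ≤ 2 ^ (p - 1) * (x ^ p + y ^ p) := by
  lift x to ℝ≥0 using hx
  lift y to ℝ≥0 using hy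
  have h := NNReal.rpow_add_le_mul_rpow_add_rpow x y hp
  exact_mod_cast h

private lemma aux2 (p x y : ℝ) (hp : 1 ≤ p) (hx : 0 ≤ x) (hy : 0 ≤ y) :
    x ^ p + y ^ p ≤ (x + y) ^ p := by
  lift x to ℝ≥0 using hx
  lift y to ℝ≥0 using hy
  have h := NNReal.add_rpow_le_rpow_add x y hp
  exact_mod_cast h

private lemma core_le (r : ℝ) (hr : 0 ≤ r) (x y : ℝ) (hxy : 0 ≤ x + y) (hyx : y ≤ x) :
    (2 : ℝ) ^ (-r) * (x + y) ^ (r + 1) ≤ |x| ^ r * x + |y| ^ r * y := by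
  have hx : 0 ≤ x := by linarith
  have h2 : (2 : ℝ) ^ (-r) * 2 ^ r = 1 := by
    rw [← Real.rpow_add (by norm_num)]; simp
  rcases le_or_gt 0 y with hy | hy
  · rw [abs_of_nonneg hx, abs_of_nonneg hy, rpow_mul_self_aux hx r hr,
      rpow_mul_self_aux hy r hr]
    have h := aux1 (r + 1) x y (by linarith) hx hy
    have h2' : (0:ℝ) < 2 ^ (-r) := Real.rpow_pos_of_pos (by norm_num) _
    calc (2 : ℝ) ^ (-r) * (x + y) ^ (r + 1)
        ≤ (2 : ℝ) ^ (-r) * (2 ^ (r + 1 - 1) * (x ^ (r+1) + y ^ (r+1))) := by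
          exact mul_le_mul_of_nonneg_left h h2'.le
      _ = x ^ (r+1) + y ^ (r+1) := by
          rw [show r + 1 - 1 = r by ring, ← mul_assoc, h2, one_mul]
  · set z := -y with hz
    have hz0 : 0 ≤ z := by linarith
    have hzx : z ≤ x := by linarith
    rw [abs_of_nonneg hx, abs_of_neg hy, rpow_mul_self_aux hx r hr]
    have : (-y) ^ r * y = -((-y) ^ r * (-y)) := by ring
    rw [this, rpow_mul_self_aux (by linarith : (0:ℝ) ≤ -y) r hr]
    -- goal: 2^(-r) * (x + y)^(r+1) ≤ x^(r+1) - (-y)^(r+1)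
    have h := aux2 (r + 1) (-y) (x + y) (by linarith) (by linarith) hxy
    rw [show -y + (x + y) = x by ring] at h
    have hle1 : (2 : ℝ) ^ (-r) ≤ 1 :=
      Real.rpow_le_one_of_one_le_of_nonpos (by norm_num) (by linarith)
    have hpow : 0 ≤ (x + y) ^ (r + 1) := Real.rpow_nonneg hxy _
    linarith [mul_le_of_le_one_left hpow hle1]

private lemma core (r : ℝ) (hr : 0 ≤ r) (x y : ℝ) (hxy : 0 ≤ x + y) :
    (2 : ℝ) ^ (-r) * (x + y) ^ (r + 1) ≤ |x| ^ r * x + |y| ^ r * y := by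
  rcases le_total y x with h | h
  · exact core_le r hr x y hxy h
  · have := core_le r hr y x (by linarith) h
    rw [add_comm y x] at this
    linarith

private lemma main_aux (r : ℝ) (hr : 0 ≤ r) (a b : ℝ) (hba : b ≤ a) :
    (|a| ^ r * a - |b| ^ r * b) * (a - b) ≥ (2 : ℝ) ^ (-r) * |a - b| ^ (r + 2) := by
  rcases eq_or_lt_of_le hba with h | h
  · subst h
    simp [Real.zero_rpow (show r + 2 ≠ 0 by linarith)]
  · have hab : 0 < a - b := by linarith
    rw [abs_of_pos hab]
    have hc := core r hr a (-b) (by linarith)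
    rw [abs_neg] at hc
    have key : |a| ^ r * a - |b| ^ r * b = |a| ^ r * a + |b| ^ r * (-b) := by ring
    rw [key]
    have h1 : (2 : ℝ) ^ (-r) * (a - b) ^ (r + 1) * (a - b)
        ≤ (|a| ^ r * a + |b| ^ r * (-b)) * (a - b) := by
      apply mul_le_mul_of_nonneg_right _ hab.le
      rw [show a + -b = a - b by ring] at hc
      exact hc
    calc (2 : ℝ) ^ (-r) * (a - b) ^ (r + 2)
        = (2 : ℝ) ^ (-r) * (a - b) ^ (r + 1) * (a - b) := by
          rw [mul_assoc, ← Real.rpow_add_one hab.ne']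
          ring_nf
      _ ≤ _ := h1

/-- For every `r ≥ 0` and all `a b : ℝ`:
`(|a|^r·a − |b|^r·b)·(a − b) ≥ 2^{−r}·|a − b|^{r+2}`. -/
theorem abs_rpow_mul_sub_mul_sub_ge (r : ℝ) (hr : 0 ≤ r) (a b : ℝ) :
    (|a| ^ r * a - |b| ^ r * b) * (a - b) ≥ (2 : ℝ) ^ (-r) * |a - b| ^ (r + 2) := by
  rcases le_total b a with h | h
  · exact main_aux r hr a b h
  · have := main_aux r hr b a h
    rw [abs_sub_comm] at this
    calc (2 : ℝ) ^ (-r) * |a - b| ^ (r + 2)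
        ≤ (|b| ^ r * b - |a| ^ r * a) * (b - a) := this
      _ = (|a| ^ r * a - |b| ^ r * b) * (a - b) := by ring
end

section
/- Let p ≥ 2 be a real number. For all real numbers a, b: (|a|^{p/2} − |b|^{p/2})^2 ≤ (p^2/(4(p−1)))·(|a|^{p−2}·a − |b|^{p−2}·b)·(a − b). In particular, if ζ ∈ ℝ satisfies ζ^2 ≤ 4(p−1)/p^2, then ζ^2·(|a|^{p/2} − |b|^{p/2})^2 ≤ (|a|^{p−2}·a − |b|^{p−2}·b)·(a − b). -/
open MeasureTheory


lemma cs_aux (α : ℝ) (hα : 0 ≤ α) {x y : ℝ} (hy : 0 ≤ y) (hxy : y ≤ x) :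
    ((x ^ (α+1) - y ^ (α+1)) / (α+1)) ^ 2
      ≤ (x - y) * ((x ^ (2*α+1) - y ^ (2*α+1)) / (2*α+1)) := by
  have h1 : ∫ t in Set.Ioc y x, t ^ α = (x ^ (α+1) - y ^ (α+1)) / (α+1) := by
    rw [← intervalIntegral.integral_of_le hxy, integral_rpow (Or.inl (by linarith))]
  have h2 : ∫ t in Set.Ioc y x, t ^ (2*α) = (x ^ (2*α+1) - y ^ (2*α+1)) / (2*α+1) := by
    rw [← intervalIntegral.integral_of_le hxy, integral_rpow (Or.inl (by linarith))]
  set μ := volume.restrict (Set.Ioc y x) with hμ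
  haveI : IsFiniteMeasure μ := by
    constructor
    rw [hμ, Measure.restrict_apply_univ, Real.volume_Ioc]
    exact ENNReal.ofReal_lt_top
  have hmeas : Measurable fun t : ℝ => t ^ α := by measurability
  have hmem : MemLp (fun t : ℝ => t ^ α) (ENNReal.ofReal 2) μ := by
    apply MemLp.of_bound hmeas.aestronglyMeasurable (x ^ α)
    filter_upwards [ae_restrict_mem measurableSet_Ioc] with t ht
    rw [Real.norm_of_nonneg (Real.rpow_nonneg (le_trans hy ht.1.le) α)]
    exact Real.rpow_le_rpow (le_trans hy ht.1.le) ht.2 hα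
  have hmem1 : MemLp (fun _ : ℝ => (1:ℝ)) (ENNReal.ofReal 2) μ := memLp_const 1
  have hpq : (2:ℝ).HolderConjugate 2 := Real.holderConjugate_iff.mpr ⟨one_lt_two, by norm_num⟩
  have hnn : 0 ≤ᵐ[μ] fun t : ℝ => t ^ α := by
    filter_upwards [ae_restrict_mem measurableSet_Ioc] with t ht
    exact Real.rpow_nonneg (le_trans hy ht.1.le) α
  have hold := integral_mul_le_Lp_mul_Lq_of_nonneg hpq
    (f := fun t : ℝ => t ^ α) (g := fun _ => (1:ℝ)) (μ := μ)
    hnn (ae_of_all _ fun _ => zero_le_one) hmem hmem1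
  simp only [mul_one, Real.one_rpow] at hold
  have hsq : ∫ t, (t ^ α) ^ (2:ℝ) ∂μ = ∫ t in Set.Ioc y x, t ^ (2*α) := by
    rw [hμ]
    apply setIntegral_congr_fun measurableSet_Ioc
    intro t ht
    show (t ^ α) ^ (2:ℝ) = t ^ (2*α)
    rw [mul_comm 2 α]
    exact (Real.rpow_mul (le_trans hy ht.1.le) α 2).symm
  have hone : ∫ _ : ℝ, (1:ℝ) ∂μ = x - y := by
    simp [hμ, Real.volume_Ioc, ENNReal.toReal_ofReal (by linarith : (0:ℝ) ≤ x - y), hxy]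
  rw [hsq, hone, h2] at hold
  rw [← h1]
  set I1 := ∫ t, t ^ α ∂μ with hI1def
  set I2 := (x ^ (2*α+1) - y ^ (2*α+1)) / (2*α+1) with hI2def
  have hI2 : 0 ≤ I2 := by
    rw [← h2]; exact setIntegral_nonneg measurableSet_Ioc fun t ht =>
      Real.rpow_nonneg (le_trans hy ht.1.le) _
  have hI1 : 0 ≤ I1 := integral_nonneg_of_ae hnn
  rw [show (1/2 : ℝ) = (1/2 : ℝ) from rfl, ← Real.sqrt_eq_rpow, ← Real.sqrt_eq_rpow] at hold
  have h3 : (Real.sqrt I2 * Real.sqrt (x-y)) ^ 2 = I2 * (x - y) := by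
    rw [mul_pow, Real.sq_sqrt hI2, Real.sq_sqrt (by linarith)]
  calc I1 ^ 2 ≤ (Real.sqrt I2 * Real.sqrt (x-y)) ^ 2 := by
        apply pow_le_pow_left₀ hI1 hold
    _ = (x - y) * I2 := by rw [h3]; ring

lemma rpow_comb {x : ℝ} (hx : 0 ≤ x) {r s : ℝ} (h : r + s ≠ 0) :
    x ^ r * x ^ s = x ^ (r + s) := (Real.rpow_add' hx h).symm

lemma lemA (p : ℝ) (hp : 2 ≤ p) {x y : ℝ} (hy : 0 ≤ y) (hx : 0 ≤ x) :
    (x ^ (p/2) - y ^ (p/2)) ^ 2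
      ≤ p ^ 2 / (4*(p-1)) * ((x ^ (p-1) - y ^ (p-1)) * (x - y)) := by
  wlog hxy : y ≤ x with H
  · have := H p hp hx hy (le_of_not_ge hxy)
    nlinarith [this]
  have key := cs_aux (p/2 - 1) (by linarith) hy hxy
  have e1 : p/2 - 1 + 1 = p/2 := by ring
  have e2 : 2*(p/2-1) + 1 = p - 1 := by ring
  rw [e1, e2] at key
  have hp1 : (0:ℝ) < p - 1 := by linarith
  rw [div_pow, div_le_iff₀ (by positivity)] at key
  have heq : (x - y) * ((x ^ (p-1) - y ^ (p-1)) / (p-1)) * (p/2) ^ 2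
      = p ^ 2 / (4*(p-1)) * ((x ^ (p-1) - y ^ (p-1)) * (x - y)) := by
    field_simp; ring
  linarith [key, heq]

lemma lemB (p : ℝ) (hp : 2 ≤ p) {x y : ℝ} (hx : 0 ≤ x) (hy : 0 ≤ y) :
    (x ^ (p/2) - y ^ (p/2)) ^ 2
      ≤ p ^ 2 / (4*(p-1)) * ((x ^ (p-1) + y ^ (p-1)) * (x + y)) := by
  have hC : 1 ≤ p ^ 2 / (4*(p-1)) := by
    rw [le_div_iff₀ (by linarith)]
    nlinarith [sq_nonneg (p-2)]
  have hne1 : (p-1)/2 + 1/2 ≠ 0 := by intro h; linarith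
  have hne2 : (1:ℝ)/2 + (p-1)/2 ≠ 0 := by intro h; linarith
  have hne3 : (p-1)/2 + (p-1)/2 ≠ 0 := by intro h; linarith
  have hne4 : (1:ℝ)/2 + 1/2 ≠ 0 := by norm_num
  have hne5 : p/2 + p/2 ≠ 0 := by intro h; linarith
  have hne6 : p - 1 + 1 ≠ 0 := by intro h; linarith
  set u := x ^ ((p-1)/2) * y ^ ((1:ℝ)/2) with hu
  set v := x ^ ((1:ℝ)/2) * y ^ ((p-1)/2) with hv
  have huv : u * v = x ^ (p/2) * y ^ (p/2) := by
    rw [hu, hv]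
    calc x ^ ((p-1)/2) * y ^ ((1:ℝ)/2) * (x ^ ((1:ℝ)/2) * y ^ ((p-1)/2))
        = x ^ ((p-1)/2) * x ^ ((1:ℝ)/2) * (y ^ ((1:ℝ)/2) * y ^ ((p-1)/2)) := by ring
      _ = x ^ ((p-1)/2 + 1/2) * y ^ ((1:ℝ)/2 + (p-1)/2) := by
          rw [rpow_comb hx hne1, rpow_comb hy hne2]
      _ = x ^ (p/2) * y ^ (p/2) := by
          rw [show (p-1)/2 + 1/2 = p/2 by ring, show (1:ℝ)/2 + (p-1)/2 = p/2 by ring]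
  have hu2 : u ^ 2 = x ^ (p-1) * y := by
    rw [hu, mul_pow, sq, sq, rpow_comb hx hne3, rpow_comb hy hne4,
      show (p-1)/2 + (p-1)/2 = p - 1 by ring, show (1:ℝ)/2 + 1/2 = (1:ℝ) by ring,
      Real.rpow_one]
  have hv2 : v ^ 2 = x * y ^ (p-1) := by
    rw [hv, mul_pow, sq, sq, rpow_comb hx hne4, rpow_comb hy hne3,
      show (p-1)/2 + (p-1)/2 = p - 1 by ring, show (1:ℝ)/2 + 1/2 = (1:ℝ) by ring,
      Real.rpow_one]
  have amgm : 2 * (x ^ (p/2) * y ^ (p/2)) ≤ x ^ (p-1) * y + x * y ^ (p-1) := by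
    nlinarith [sq_nonneg (u - v), huv, hu2, hv2]
  have hxp : x ^ (p-1) * x = x ^ p := by
    have h := rpow_comb hx hne6
    rw [Real.rpow_one] at h
    rw [h, show p - 1 + 1 = p by ring]
  have hyp : y ^ (p-1) * y = y ^ p := by
    have h := rpow_comb hy hne6
    rw [Real.rpow_one] at h
    rw [h, show p - 1 + 1 = p by ring]
  have hxp2 : x ^ (p/2) * x ^ (p/2) = x ^ p := by
    rw [rpow_comb hx hne5, show p/2 + p/2 = p by ring]
  have hyp2 : y ^ (p/2) * y ^ (p/2) = y ^ p := by
    rw [rpow_comb hy hne5, show p/2 + p/2 = p by ring]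
  have expand : (x ^ (p/2) + y ^ (p/2)) ^ 2 ≤ (x ^ (p-1) + y ^ (p-1)) * (x + y) := by
    nlinarith [amgm, hxp, hyp, hxp2, hyp2]
  have h0 : (x ^ (p/2) - y ^ (p/2)) ^ 2 ≤ (x ^ (p/2) + y ^ (p/2)) ^ 2 := by
    nlinarith [mul_nonneg (Real.rpow_nonneg hx (p/2)) (Real.rpow_nonneg hy (p/2))]
  have hR : 0 ≤ (x ^ (p-1) + y ^ (p-1)) * (x + y) := by positivity
  nlinarith [hC, hR, h0, expand]

lemma rpow_sub_two_mul (p : ℝ) (hp : 2 ≤ p) {t : ℝ} (ht : 0 ≤ t) :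
    t ^ (p-2) * t = t ^ (p-1) := by
  have h := rpow_comb ht (show p - 2 + 1 ≠ 0 by intro h; linarith)
  rw [Real.rpow_one] at h
  rw [h, show p - 2 + 1 = p - 1 by ring]

/-- For `p ≥ 2` and all `a b : ℝ`:
`(|a|^{p/2} − |b|^{p/2})^2 ≤ (p²/(4(p−1)))·(|a|^{p−2}a − |b|^{p−2}b)(a − b)`,
and consequently, if `ζ² ≤ 4(p−1)/p²`, then
`ζ²(|a|^{p/2} − |b|^{p/2})^2 ≤ (|a|^{p−2}a − |b|^{p−2}b)(a − b)`. -/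
theorem p_laplace_monotonicity (p : ℝ) (hp : 2 ≤ p) (a b : ℝ) :
    (|a| ^ (p / 2) - |b| ^ (p / 2)) ^ 2 ≤
        p ^ 2 / (4 * (p - 1)) * ((|a| ^ (p - 2) * a - |b| ^ (p - 2) * b) * (a - b)) ∧
      ∀ ζ : ℝ, ζ ^ 2 ≤ 4 * (p - 1) / p ^ 2 →
        ζ ^ 2 * (|a| ^ (p / 2) - |b| ^ (p / 2)) ^ 2 ≤
          (|a| ^ (p - 2) * a - |b| ^ (p - 2) * b) * (a - b) := by
  have hp1 : (0:ℝ) < p - 1 := by linarith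
  have hp0 : (0:ℝ) < p := by linarith
  have h1 : (|a| ^ (p / 2) - |b| ^ (p / 2)) ^ 2 ≤
      p ^ 2 / (4 * (p - 1)) * ((|a| ^ (p - 2) * a - |b| ^ (p - 2) * b) * (a - b)) := by
    rcases le_or_gt 0 a with ha | ha <;> rcases le_or_gt 0 b with hb | hb
    · rw [abs_of_nonneg ha, abs_of_nonneg hb, rpow_sub_two_mul p hp ha,
        rpow_sub_two_mul p hp hb]
      exact lemA p hp hb ha
    · rw [abs_of_nonneg ha, abs_of_neg hb]
      have eb : (-b) ^ (p-2) * b = -((-b) ^ (p-1)) := by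
        rw [← rpow_sub_two_mul p hp (neg_nonneg.2 hb.le)]; ring
      rw [eb, rpow_sub_two_mul p hp ha]
      calc (a ^ (p/2) - (-b) ^ (p/2)) ^ 2
          ≤ p ^ 2 / (4*(p-1)) * ((a ^ (p-1) + (-b) ^ (p-1)) * (a + -b)) :=
            lemB p hp ha (neg_nonneg.2 hb.le)
        _ = p ^ 2 / (4*(p-1)) * ((a ^ (p-1) - -(-b) ^ (p-1)) * (a - b)) := by ring
    · rw [abs_of_neg ha, abs_of_nonneg hb]
      have ea : (-a) ^ (p-2) * a = -((-a) ^ (p-1)) := by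
        rw [← rpow_sub_two_mul p hp (neg_nonneg.2 ha.le)]; ring
      rw [ea, rpow_sub_two_mul p hp hb]
      calc ((-a) ^ (p/2) - b ^ (p/2)) ^ 2
          ≤ p ^ 2 / (4*(p-1)) * (((-a) ^ (p-1) + b ^ (p-1)) * (-a + b)) :=
            lemB p hp (neg_nonneg.2 ha.le) hb
        _ = p ^ 2 / (4*(p-1)) * ((-(-a) ^ (p-1) - b ^ (p-1)) * (a - b)) := by ring
    · rw [abs_of_neg ha, abs_of_neg hb]
      have ea : (-a) ^ (p-2) * a = -((-a) ^ (p-1)) := by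
        rw [← rpow_sub_two_mul p hp (neg_nonneg.2 ha.le)]; ring
      have eb : (-b) ^ (p-2) * b = -((-b) ^ (p-1)) := by
        rw [← rpow_sub_two_mul p hp (neg_nonneg.2 hb.le)]; ring
      rw [ea, eb]
      calc ((-a) ^ (p/2) - (-b) ^ (p/2)) ^ 2
          ≤ p ^ 2 / (4*(p-1)) * (((-a) ^ (p-1) - (-b) ^ (p-1)) * (-a - -b)) :=
            lemA p hp (neg_nonneg.2 hb.le) (neg_nonneg.2 ha.le)
        _ = p ^ 2 / (4*(p-1)) * ((-(-a) ^ (p-1) - -(-b) ^ (p-1)) * (a - b)) := by ring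
  refine ⟨h1, fun ζ hζ => ?_⟩
  calc ζ ^ 2 * (|a| ^ (p / 2) - |b| ^ (p / 2)) ^ 2
      ≤ 4 * (p - 1) / p ^ 2 * (|a| ^ (p / 2) - |b| ^ (p / 2)) ^ 2 :=
        mul_le_mul_of_nonneg_right hζ (sq_nonneg _)
    _ ≤ 4 * (p - 1) / p ^ 2 *
        (p ^ 2 / (4 * (p - 1)) * ((|a| ^ (p - 2) * a - |b| ^ (p - 2) * b) * (a - b))) :=
        mul_le_mul_of_nonneg_left h1 (by positivity)
    _ = (|a| ^ (p - 2) * a - |b| ^ (p - 2) * b) * (a - b) := by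
        field_simp
end

section
/- Let p ≥ 2 and p_0 ≥ 2 be real numbers and let ζ ∈ ℝ satisfy ζ^2 ≤ 2(p−1)/(p^2·(p_0−1)). Then for all real numbers a, b: 2·(|a|^{p−2}·a − |b|^{p−2}·b)·(a − b) ≥ 2(p_0−1)·ζ^2·(|a|^{p/2} − |b|^{p/2})^2 + 2^{2−p}·|a − b|^p. -/
open Real Set

private lemma real_add_rpow_le_rpow_add {x y q : ℝ} (hx : 0 ≤ x) (hy : 0 ≤ y) (hq : 1 ≤ q) :
    x ^ q + y ^ q ≤ (x + y) ^ q := by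
  have h := NNReal.add_rpow_le_rpow_add x.toNNReal y.toNNReal hq
  rw [← NNReal.coe_le_coe] at h
  push_cast [Real.coe_toNNReal x hx, Real.coe_toNNReal y hy] at h
  exact h

private lemma real_rpow_add_le_mul {x y q : ℝ} (hx : 0 ≤ x) (hy : 0 ≤ y) (hq : 1 ≤ q) :
    (x + y) ^ q ≤ 2 ^ (q - 1) * (x ^ q + y ^ q) := by
  have h := NNReal.rpow_add_le_mul_rpow_add_rpow x.toNNReal y.toNNReal hq
  rw [← NNReal.coe_le_coe] at h
  push_cast [Real.coe_toNNReal x hx, Real.coe_toNNReal y hy] at h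
  exact h

private lemma keyt {α β : ℝ} (hβ0 : 0 < β) (hβ1 : β < 1) (hαβ : α + β = 2) {t : ℝ} (ht : 1 ≤ t) :
    α * β * (t - 1) ^ 2 ≤ (t ^ α - 1) * (t ^ β - 1) := by
  have hα1 : 1 < α := by linarith
  have hαβpos : 0 < α * β := mul_pos (by linarith) hβ0
  set f : ℝ → ℝ := fun s => (s ^ α - 1) * (s ^ β - 1) with hfdef
  set G : ℝ → ℝ := fun s => Real.sqrt (f s) - Real.sqrt (α * β) * (s - 1) with hGdef
  have hfnn : ∀ s : ℝ, 1 ≤ s → 0 ≤ f s := by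
    intro s hs
    have h1 : (1:ℝ) ≤ s ^ α := Real.one_le_rpow hs (by linarith)
    have h2 : (1:ℝ) ≤ s ^ β := Real.one_le_rpow hs hβ0.le
    simp only [hfdef]
    nlinarith
  have hfpos : ∀ s : ℝ, 1 < s → 0 < f s := by
    intro s hs
    have h1 : 1 < s ^ α := (Real.one_lt_rpow_iff_of_pos (by linarith)).mpr
      (Or.inl ⟨hs, by linarith⟩)
    have h2 : 1 < s ^ β := (Real.one_lt_rpow_iff_of_pos (by linarith)).mpr
      (Or.inl ⟨hs, hβ0⟩)
    exact mul_pos (by linarith) (by linarith)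
  have hds : ∀ s : ℝ, 1 < s → HasDerivAt G
      ((α * s ^ (α - 1) * (s ^ β - 1) + (s ^ α - 1) * (β * s ^ (β - 1))) / (2 * Real.sqrt (f s))
        - Real.sqrt (α * β)) s := by
    intro s hs
    have hs0 : s ≠ 0 := by linarith
    have hA : HasDerivAt (fun x : ℝ => x ^ α - 1) (α * s ^ (α - 1)) s :=
      (Real.hasDerivAt_rpow_const (Or.inl hs0)).sub_const 1
    have hB : HasDerivAt (fun x : ℝ => x ^ β - 1) (β * s ^ (β - 1)) s :=
      (Real.hasDerivAt_rpow_const (Or.inl hs0)).sub_const 1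
    have hfd : HasDerivAt f
        (α * s ^ (α - 1) * (s ^ β - 1) + (s ^ α - 1) * (β * s ^ (β - 1))) s := hA.mul hB
    have hsqrt := hfd.sqrt (hfpos s hs).ne'
    have hlin : HasDerivAt (fun x : ℝ => Real.sqrt (α * β) * (x - 1)) (Real.sqrt (α * β)) s := by
      simpa using ((hasDerivAt_id s).sub_const 1).const_mul (Real.sqrt (α * β))
    exact hsqrt.sub hlin
  have hmono : MonotoneOn G (Set.Ici 1) := by
    apply monotoneOn_of_deriv_nonneg (convex_Ici 1)
    · have hc1 : ContinuousOn (fun s : ℝ => s ^ α) (Set.Ici 1) := fun s _ =>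
        (Real.continuousAt_rpow_const s α (Or.inr (by linarith))).continuousWithinAt
      have hc2 : ContinuousOn (fun s : ℝ => s ^ β) (Set.Ici 1) := fun s _ =>
        (Real.continuousAt_rpow_const s β (Or.inr hβ0.le)).continuousWithinAt
      have hcf : ContinuousOn f (Set.Ici 1) := (hc1.sub continuousOn_const).mul
        (hc2.sub continuousOn_const)
      exact (Real.continuous_sqrt.comp_continuousOn hcf).sub
        (continuousOn_const.mul (continuousOn_id.sub continuousOn_const))
    · rw [interior_Ici]
      intro s hs
      exact (hds s hs).differentiableAt.differentiableWithinAt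
    · rw [interior_Ici]
      intro s hs
      rw [(hds s hs).deriv]
      have hs1 : (1:ℝ) < s := hs
      have hs0 : (0:ℝ) < s := by linarith
      have hsq : 0 < 2 * Real.sqrt (f s) := by
        have := hfpos s hs1
        positivity
      rw [sub_nonneg, le_div_iff₀ hsq]
      have hb1 : (1:ℝ) ≤ s ^ β := Real.one_le_rpow hs1.le hβ0.le
      have ha1 : (1:ℝ) ≤ s ^ α := Real.one_le_rpow hs1.le (by linarith)
      set X := α * s ^ (α - 1) * (s ^ β - 1) with hX
      set Y := (s ^ α - 1) * (β * s ^ (β - 1)) with hY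
      have hXpos : 0 ≤ X :=
        mul_nonneg (mul_nonneg (by linarith) (Real.rpow_nonneg hs0.le _)) (by linarith)
      have hYpos : 0 ≤ Y :=
        mul_nonneg (by linarith) (mul_nonneg hβ0.le (Real.rpow_nonneg hs0.le _))
      have hss : s ^ (α - 1) * s ^ (β - 1) = 1 := by
        rw [← Real.rpow_add hs0, show α - 1 + (β - 1) = 0 by linarith, Real.rpow_zero]
      have hXY : X * Y = (α * β) * f s := by
        have : X * Y = α * β * ((s ^ α - 1) * (s ^ β - 1)) * (s ^ (α - 1) * s ^ (β - 1)) := by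
          simp only [hX, hY]; ring
        rw [this, hss, mul_one]
      have hsqrtXY : Real.sqrt (α * β) * Real.sqrt (f s) = Real.sqrt X * Real.sqrt Y := by
        rw [← Real.sqrt_mul hαβpos.le, ← hXY, Real.sqrt_mul hXpos]
      have hAMGM : 2 * (Real.sqrt X * Real.sqrt Y) ≤ X + Y := by
        nlinarith [sq_nonneg (Real.sqrt X - Real.sqrt Y), Real.sq_sqrt hXpos, Real.sq_sqrt hYpos]
      calc Real.sqrt (α * β) * (2 * Real.sqrt (f s))
          = 2 * (Real.sqrt X * Real.sqrt Y) := by rw [← hsqrtXY]; ring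
        _ ≤ X + Y := hAMGM
  have hG1 : G 1 = 0 := by simp [hGdef, hfdef]
  have hle : G 1 ≤ G t := hmono (Set.self_mem_Ici) (Set.mem_Ici.mpr ht) ht
  rw [hG1] at hle
  have h1 : Real.sqrt (α * β) * (t - 1) ≤ Real.sqrt (f t) := by
    simp only [hGdef] at hle; linarith
  have h2 := mul_self_le_mul_self (mul_nonneg (Real.sqrt_nonneg _) (by linarith : (0:ℝ) ≤ t - 1)) h1
  have hft : f t = (t ^ α - 1) * (t ^ β - 1) := rfl
  nlinarith [Real.sq_sqrt hαβpos.le, Real.sq_sqrt (hfnn t ht), h2]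

private lemma keyuv {α β : ℝ} (hβ0 : 0 < β) (hβ1 : β ≤ 1) (hαβ : α + β = 2) {u v : ℝ}
    (hv : 0 ≤ v) (hvu : v ≤ u) :
    α * β * (u - v) ^ 2 ≤ (u ^ α - v ^ α) * (u ^ β - v ^ β) := by
  have hα : 1 ≤ α := by linarith
  have hu : 0 ≤ u := hv.trans hvu
  rcases eq_or_lt_of_le hβ1 with heq | hβlt
  · have hαeq : α = 1 := by linarith
    simp only [heq, hαeq, Real.rpow_one]
    nlinarith
  · rcases eq_or_lt_of_le hv with hv0 | hvpos
    · rw [← hv0, Real.zero_rpow (by linarith : α ≠ 0), Real.zero_rpow hβ0.ne', sub_zero,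
        sub_zero, sub_zero]
      have h2 : u ^ α * u ^ β = u ^ (2:ℝ) := by
        rw [← Real.rpow_add' hu (by rw [hαβ]; norm_num)]
        rw [hαβ]
      have h3 : u ^ (2:ℝ) = u ^ (2:ℕ) := by
        rw [show (2:ℝ) = ((2:ℕ):ℝ) by norm_num, Real.rpow_natCast]
      have hαβ1 : α * β ≤ 1 := by nlinarith [sq_nonneg (α - β)]
      rw [h2, h3]
      nlinarith [sq_nonneg u]
    · set t := u / v with htdef
      have ht : 1 ≤ t := (one_le_div hvpos).mpr hvu
      have hueq : u = v * t := by rw [htdef]; field_simp [hvpos.ne']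
      have h := keyt hβ0 hβlt hαβ ht
      have ht0 : 0 ≤ t := by linarith
      have e1 : u ^ α - v ^ α = v ^ α * (t ^ α - 1) := by
        rw [hueq, Real.mul_rpow hvpos.le ht0]; ring
      have e2 : u ^ β - v ^ β = v ^ β * (t ^ β - 1) := by
        rw [hueq, Real.mul_rpow hvpos.le ht0]; ring
      have e3 : v ^ α * v ^ β = v ^ (2:ℕ) := by
        rw [← Real.rpow_add hvpos, hαβ, show (2:ℝ) = ((2:ℕ):ℝ) by norm_num, Real.rpow_natCast]
      calc α * β * (u - v) ^ 2 = v ^ (2:ℕ) * (α * β * (t - 1) ^ 2) := by rw [hueq]; ring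
        _ ≤ v ^ (2:ℕ) * ((t ^ α - 1) * (t ^ β - 1)) :=
            mul_le_mul_of_nonneg_left h (by positivity)
        _ = (u ^ α - v ^ α) * (u ^ β - v ^ β) := by rw [e1, e2, ← e3]; ring

private lemma keyp {p : ℝ} (hp : 2 ≤ p) {x y : ℝ} (hy : 0 ≤ y) (hx : y ≤ x) :
    4 * (p - 1) / p ^ 2 * (x ^ (p / 2) - y ^ (p / 2)) ^ 2 ≤ (x ^ (p - 1) - y ^ (p - 1)) * (x - y) := by
  have hp0 : (0:ℝ) < p := by linarith
  have hx0 : 0 ≤ x := hy.trans hx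
  have h := keyuv (α := 2 * (p - 1) / p) (β := 2 / p) (by positivity)
    (by rw [div_le_one hp0]; linarith) (by field_simp; ring)
    (Real.rpow_nonneg hy (p / 2)) (Real.rpow_le_rpow hy hx (by positivity))
  have ex1 : (x ^ (p / 2)) ^ (2 * (p - 1) / p) = x ^ (p - 1) := by
    rw [← Real.rpow_mul hx0]
    congr 1
    field_simp
  have ex2 : (x ^ (p / 2)) ^ (2 / p) = x := by
    rw [← Real.rpow_mul hx0]
    rw [show p / 2 * (2 / p) = 1 by field_simp]
    exact Real.rpow_one x
  have ey1 : (y ^ (p / 2)) ^ (2 * (p - 1) / p) = y ^ (p - 1) := by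
    rw [← Real.rpow_mul hy]
    congr 1
    field_simp
  have ey2 : (y ^ (p / 2)) ^ (2 / p) = y := by
    rw [← Real.rpow_mul hy]
    rw [show p / 2 * (2 / p) = 1 by field_simp]
    exact Real.rpow_one y
  rw [ex1, ex2, ey1, ey2] at h
  have hc : 2 * (p - 1) / p * (2 / p) = 4 * (p - 1) / p ^ 2 := by
    field_simp
    ring
  rw [hc] at h
  exact h

private lemma phi_eq {p : ℝ} (hp : 2 ≤ p) {z : ℝ} (hz : 0 ≤ z) :
    z ^ (p - 2) * z = z ^ (p - 1) := by
  rw [show p - 1 = p - 2 + 1 by ring, Real.rpow_add' hz (by linarith : p - 2 + 1 ≠ 0),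
    Real.rpow_one]

private lemma keypSym {p : ℝ} (hp : 2 ≤ p) {x y : ℝ} (hx : 0 ≤ x) (hy : 0 ≤ y) :
    4 * (p - 1) / p ^ 2 * (x ^ (p / 2) - y ^ (p / 2)) ^ 2 ≤
      (x ^ (p - 1) - y ^ (p - 1)) * (x - y) := by
  rcases le_total y x with h | h
  · exact keyp hp hy h
  · have h1 := keyp hp hx h
    have h3 : (x ^ (p / 2) - y ^ (p / 2)) ^ 2 = (y ^ (p / 2) - x ^ (p / 2)) ^ 2 := by ring
    rw [h3]
    exact le_trans h1 (le_of_eq (by ring))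

private lemma mixed {p : ℝ} (hp : 2 ≤ p) {x y : ℝ} (hx : 0 ≤ x) (hy : 0 ≤ y) :
    4 * (p - 1) / p ^ 2 * (x ^ (p / 2) - y ^ (p / 2)) ^ 2 ≤
      (x ^ (p - 1) + y ^ (p - 1)) * (x + y) := by
  have hp0 : (0:ℝ) < p := by linarith
  have hA : x ^ (p / 2) * x ^ (p / 2) = x ^ p := by
    rw [← Real.rpow_add' hx (by linarith : p / 2 + p / 2 ≠ 0)]
    norm_num
  have hB : y ^ (p / 2) * y ^ (p / 2) = y ^ p := by
    rw [← Real.rpow_add' hy (by linarith : p / 2 + p / 2 ≠ 0)]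
    norm_num
  have hx1 : x ^ (p - 1) * x = x ^ p := by
    have h := Real.rpow_add' hx (by linarith : p - 1 + 1 ≠ 0)
    rw [Real.rpow_one, show p - 1 + 1 = p by ring] at h
    exact h.symm
  have hy1 : y ^ (p - 1) * y = y ^ p := by
    have h := Real.rpow_add' hy (by linarith : p - 1 + 1 ≠ 0)
    rw [Real.rpow_one, show p - 1 + 1 = p by ring] at h
    exact h.symm
  have hcle : 4 * (p - 1) / p ^ 2 ≤ 1 := by
    rw [div_le_one (pow_pos hp0 2)]
    nlinarith
  have hc0 : (0:ℝ) ≤ 4 * (p - 1) / p ^ 2 :=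
    div_nonneg (by linarith) (sq_nonneg p)
  nlinarith [sq_nonneg (x ^ (p / 2) - y ^ (p / 2)),
    mul_nonneg (Real.rpow_nonneg hx (p / 2)) (Real.rpow_nonneg hy (p / 2)),
    mul_nonneg (Real.rpow_nonneg hx (p - 1)) hy,
    mul_nonneg (Real.rpow_nonneg hy (p - 1)) hx]

private lemma lemOne {p : ℝ} (hp : 2 ≤ p) (a b : ℝ) :
    4 * (p - 1) / p ^ 2 * (|a| ^ (p / 2) - |b| ^ (p / 2)) ^ 2 ≤
      (|a| ^ (p - 2) * a - |b| ^ (p - 2) * b) * (a - b) := by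
  rcases le_total 0 a with ha | ha <;> rcases le_total 0 b with hb | hb
  · rw [abs_of_nonneg ha, abs_of_nonneg hb, phi_eq hp ha, phi_eq hp hb]
    exact keypSym hp ha hb
  · -- 0 ≤ a, b ≤ 0
    have hnb : 0 ≤ -b := neg_nonneg.mpr hb
    rw [abs_of_nonneg ha, abs_of_nonpos hb, phi_eq hp ha]
    have eb : (-b) ^ (p - 2) * b = -((-b) ^ (p - 1)) := by
      rw [← phi_eq hp hnb]; ring
    rw [eb]
    exact le_trans (mixed hp ha hnb) (le_of_eq (by ring))
  · -- a ≤ 0, 0 ≤ b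
    have hna : 0 ≤ -a := neg_nonneg.mpr ha
    rw [abs_of_nonpos ha, abs_of_nonneg hb, phi_eq hp hb]
    have ea : (-a) ^ (p - 2) * a = -((-a) ^ (p - 1)) := by
      rw [← phi_eq hp hna]; ring
    rw [ea]
    have h3 : ((-a) ^ (p / 2) - b ^ (p / 2)) ^ 2 = (b ^ (p / 2) - (-a) ^ (p / 2)) ^ 2 := by ring
    rw [h3]
    exact le_trans (mixed hp hb hna) (le_of_eq (by ring))
  · -- a ≤ 0, b ≤ 0
    have hna : 0 ≤ -a := neg_nonneg.mpr ha
    have hnb : 0 ≤ -b := neg_nonneg.mpr hb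
    rw [abs_of_nonpos ha, abs_of_nonpos hb]
    have ea : (-a) ^ (p - 2) * a = -((-a) ^ (p - 1)) := by
      rw [← phi_eq hp hna]; ring
    have eb : (-b) ^ (p - 2) * b = -((-b) ^ (p - 1)) := by
      rw [← phi_eq hp hnb]; ring
    rw [ea, eb]
    exact le_trans (keypSym hp hna hnb) (le_of_eq (by ring))

private lemma lemTwo' {p : ℝ} (hp : 2 ≤ p) {a b : ℝ} (hba : b ≤ a) :
    (2:ℝ) ^ (2 - p) * (a - b) ^ p ≤ (|a| ^ (p - 2) * a - |b| ^ (p - 2) * b) * (a - b) := by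
  have hab : 0 ≤ a - b := sub_nonneg.mpr hba
  have hq : 1 ≤ p - 1 := by linarith
  have h2le1 : (2:ℝ) ^ (2 - p) ≤ 1 :=
    Real.rpow_le_one_of_one_le_of_nonpos one_le_two (by linarith)
  have h2nn : (0:ℝ) ≤ (2:ℝ) ^ (2 - p) := Real.rpow_nonneg (by norm_num) _
  have hpw : (0:ℝ) ≤ (a - b) ^ (p - 1) := Real.rpow_nonneg hab _
  have hstep : (2:ℝ) ^ (2 - p) * (a - b) ^ (p - 1) ≤
      |a| ^ (p - 2) * a - |b| ^ (p - 2) * b := by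
    rcases le_total 0 b with hb | hb
    · have ha : 0 ≤ a := hb.trans hba
      rw [abs_of_nonneg ha, abs_of_nonneg hb, phi_eq hp ha, phi_eq hp hb]
      have hsup := real_add_rpow_le_rpow_add hb hab hq
      rw [show b + (a - b) = a by ring] at hsup
      nlinarith
    · rcases le_total a 0 with ha | ha
      · have hna : 0 ≤ -a := neg_nonneg.mpr ha
        have hnb : 0 ≤ -b := neg_nonneg.mpr hb
        rw [abs_of_nonpos ha, abs_of_nonpos hb]
        have ea : (-a) ^ (p - 2) * a = -((-a) ^ (p - 1)) := by
          rw [← phi_eq hp hna]; ring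
        have eb : (-b) ^ (p - 2) * b = -((-b) ^ (p - 1)) := by
          rw [← phi_eq hp hnb]; ring
        rw [ea, eb]
        have hsup := real_add_rpow_le_rpow_add hna hab hq
        rw [show -a + (a - b) = -b by ring] at hsup
        nlinarith
      · have hnb : 0 ≤ -b := neg_nonneg.mpr hb
        rw [abs_of_nonneg ha, abs_of_nonpos hb, phi_eq hp ha]
        have eb : (-b) ^ (p - 2) * b = -((-b) ^ (p - 1)) := by
          rw [← phi_eq hp hnb]; ring
        rw [eb]
        have hconv := real_rpow_add_le_mul ha hnb hq
        rw [show a + -b = a - b by ring] at hconv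
        have h2 : (2:ℝ) ^ (2 - p) * (2:ℝ) ^ (p - 1 - 1) = 1 := by
          rw [← Real.rpow_add (by norm_num : (0:ℝ) < 2),
            show 2 - p + (p - 1 - 1) = 0 by ring, Real.rpow_zero]
        calc (2:ℝ) ^ (2 - p) * (a - b) ^ (p - 1)
            ≤ (2:ℝ) ^ (2 - p) * ((2:ℝ) ^ (p - 1 - 1) * (a ^ (p - 1) + (-b) ^ (p - 1))) :=
              mul_le_mul_of_nonneg_left hconv h2nn
          _ = a ^ (p - 1) + (-b) ^ (p - 1) := by rw [← mul_assoc, h2, one_mul]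
          _ = a ^ (p - 1) - -((-b) ^ (p - 1)) := by ring
  have hpow : (a - b) ^ p = (a - b) ^ (p - 1) * (a - b) := by
    have h := Real.rpow_add' hab (by linarith : p - 1 + 1 ≠ 0)
    rw [Real.rpow_one, show p - 1 + 1 = p by ring] at h
    exact h
  calc (2:ℝ) ^ (2 - p) * (a - b) ^ p
      = ((2:ℝ) ^ (2 - p) * (a - b) ^ (p - 1)) * (a - b) := by rw [hpow]; ring
    _ ≤ (|a| ^ (p - 2) * a - |b| ^ (p - 2) * b) * (a - b) :=
        mul_le_mul_of_nonneg_right hstep hab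

private lemma lemTwo {p : ℝ} (hp : 2 ≤ p) (a b : ℝ) :
    (2:ℝ) ^ (2 - p) * |a - b| ^ p ≤ (|a| ^ (p - 2) * a - |b| ^ (p - 2) * b) * (a - b) := by
  rcases le_total b a with h | h
  · rw [abs_of_nonneg (sub_nonneg.mpr h)]
    exact lemTwo' hp h
  · rw [abs_sub_comm, abs_of_nonneg (sub_nonneg.mpr h)]
    exact le_trans (lemTwo' hp h) (le_of_eq (by ring))

/-- For `p ≥ 2`, `p₀ ≥ 2` and `ζ² ≤ 2(p−1)/(p²(p₀−1))`, for all `a b : ℝ`: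
`2(|a|^{p−2}a − |b|^{p−2}b)(a − b) ≥ 2(p₀−1)ζ²(|a|^{p/2} − |b|^{p/2})² + 2^{2−p}|a−b|^p`. -/
theorem p_laplace_strong_monotonicity (p p₀ ζ : ℝ) (hp : 2 ≤ p) (hp₀ : 2 ≤ p₀)
    (hζ : ζ ^ 2 ≤ 2 * (p - 1) / (p ^ 2 * (p₀ - 1))) (a b : ℝ) :
    2 * ((|a| ^ (p - 2) * a - |b| ^ (p - 2) * b) * (a - b)) ≥
      2 * (p₀ - 1) * ζ ^ 2 * (|a| ^ (p / 2) - |b| ^ (p / 2)) ^ 2 +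
        (2 : ℝ) ^ (2 - p) * |a - b| ^ p := by
  have h1 := lemOne hp a b
  have h2 := lemTwo hp a b
  have hp0 : (0:ℝ) < p := by linarith
  have hp₀1 : (0:ℝ) < p₀ - 1 := by linarith
  have hne1 : (p₀ - 1) ≠ 0 := hp₀1.ne'
  have hne2 : p ≠ 0 := hp0.ne'
  have hc : 2 * (p₀ - 1) * ζ ^ 2 ≤ 4 * (p - 1) / p ^ 2 := by
    have h := mul_le_mul_of_nonneg_left hζ (by linarith : (0:ℝ) ≤ 2 * (p₀ - 1))
    calc 2 * (p₀ - 1) * ζ ^ 2 = 2 * (p₀ - 1) * (ζ ^ 2) := by ring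
      _ ≤ 2 * (p₀ - 1) * (2 * (p - 1) / (p ^ 2 * (p₀ - 1))) := h
      _ = 4 * (p - 1) / p ^ 2 := by field_simp; ring
  have h3 : 2 * (p₀ - 1) * ζ ^ 2 * (|a| ^ (p / 2) - |b| ^ (p / 2)) ^ 2 ≤
      4 * (p - 1) / p ^ 2 * (|a| ^ (p / 2) - |b| ^ (p / 2)) ^ 2 :=
    mul_le_mul_of_nonneg_right hc (sq_nonneg _)
  rw [ge_iff_le]
  linarith
end

section
/- Let (X, Σ, μ) be a measure space, let p ≥ 2 be a real number, and let f, g : X → ℝ be measurable functions with ∫_X |f|^p dμ < ∞ and ∫_X |g|^p dμ < ∞. Then the function x ↦ (|f(x)|^{p−2}·f(x) − |g(x)|^{p−2}·g(x))·(f(x) − g(x)) is nonnegative and ∫_X (|f|^{p−2}·f − |g|^{p−2}·g)·(f − g) dμ ≥ 2^{2−p}·∫_X |f − g|^p dμ. -/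
open MeasureTheory

private lemma rpow_sub_one_mul' {a q : ℝ} (ha : 0 ≤ a) (hq : 1 ≤ q) :
    a ^ (q - 1) * a = a ^ q := by
  rcases ha.eq_or_lt with rfl | ha'
  · rw [Real.zero_rpow (by linarith : q ≠ 0), mul_zero]
  · rw [← Real.rpow_add_one ha'.ne', show q - 1 + 1 = q by ring]

private lemma superadd' {q : ℝ} (hq : 1 ≤ q) {x y : ℝ} (hx : 0 ≤ x) (hy : 0 ≤ y) :
    x ^ q + y ^ q ≤ (x + y) ^ q := by
  lift x to NNReal using hx
  lift y to NNReal using hy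
  exact_mod_cast NNReal.add_rpow_le_rpow_add x y hq

private lemma convex2' {q : ℝ} (hq : 1 ≤ q) {x y : ℝ} (hx : 0 ≤ x) (hy : 0 ≤ y) :
    (x + y) ^ q ≤ 2 ^ (q - 1) * (x ^ q + y ^ q) := by
  lift x to NNReal using hx
  lift y to NNReal using hy
  exact_mod_cast NNReal.rpow_add_le_mul_rpow_add_rpow x y hq

private lemma key_aux {p : ℝ} (hp : 2 ≤ p) {a b : ℝ} (hba : b ≤ a) (hab : 0 ≤ a + b) :
    2 ^ (2 - p) * |a - b| ^ p ≤ (|a| ^ (p - 2) * a - |b| ^ (p - 2) * b) * (a - b) := by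
  have hp1 : (1 : ℝ) ≤ p - 1 := by linarith
  have ha : 0 ≤ a := by linarith
  have habs : |a| ^ (p - 2) * a = a ^ (p - 1) := by
    rw [abs_of_nonneg ha, show p - 2 = (p - 1) - 1 by ring, rpow_sub_one_mul' ha hp1]
  rcases eq_or_lt_of_le hba with rfl | hba'
  · simp only [sub_self, abs_zero, mul_zero, Real.zero_rpow (by positivity : p ≠ 0)]
    simp
  have hsub : 0 < a - b := by linarith
  have habssub : |a - b| = a - b := abs_of_pos hsub
  by_cases hb : 0 ≤ b
  · -- both nonneg
    have hbabs : |b| ^ (p - 2) * b = b ^ (p - 1) := by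
      rw [abs_of_nonneg hb, show p - 2 = (p - 1) - 1 by ring, rpow_sub_one_mul' hb hp1]
    rw [habs, hbabs, habssub]
    have h1 : b ^ (p - 1) + (a - b) ^ (p - 1) ≤ a ^ (p - 1) := by
      have := superadd' hp1 hb hsub.le
      rwa [add_sub_cancel] at this
    have hc : (2 : ℝ) ^ (2 - p) ≤ 1 :=
      Real.rpow_le_one_of_one_le_of_nonpos one_le_two (by linarith)
    have hpow : (a - b) ^ p = (a - b) ^ (p - 1) * (a - b) := by
      rw [show p - 1 = p - 1 by ring, ← rpow_sub_one_mul' hsub.le (by linarith : 1 ≤ p)]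
    calc 2 ^ (2 - p) * (a - b) ^ p ≤ 1 * (a - b) ^ p := by
          apply mul_le_mul_of_nonneg_right hc (by positivity)
      _ = (a - b) ^ (p - 1) * (a - b) := by rw [one_mul, hpow]
      _ ≤ (a ^ (p - 1) - b ^ (p - 1)) * (a - b) := by
          apply mul_le_mul_of_nonneg_right _ hsub.le
          linarith
  · -- b < 0
    push_neg at hb
    set c : ℝ := -b with hc
    have hcpos : 0 < c := by simp [hc]; linarith
    have hbabs : |b| ^ (p - 2) * b = -(c ^ (p - 1)) := by
      rw [abs_of_neg hb, show -b = c from rfl, show b = -c by simp [hc],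
        show p - 2 = (p - 1) - 1 by ring, mul_neg, rpow_sub_one_mul' hcpos.le hp1]
    have hsum : a - b = a + c := by rw [hc]; ring
    rw [habs, hbabs, habssub, hsum, sub_neg_eq_add]
    have h2 : (a + c) ^ (p - 1) ≤ 2 ^ (p - 2) * (a ^ (p - 1) + c ^ (p - 1)) := by
      have := convex2' hp1 ha hcpos.le
      rwa [show p - 1 - 1 = p - 2 by ring] at this
    have hpow : (a + c) ^ p = (a + c) ^ (p - 1) * (a + c) := by
      rw [← rpow_sub_one_mul' (by positivity : (0:ℝ) ≤ a + c) (by linarith : 1 ≤ p)]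
    have hcc : (2 : ℝ) ^ (2 - p) * 2 ^ (p - 2) = 1 := by
      rw [← Real.rpow_add two_pos]; norm_num
    calc 2 ^ (2 - p) * (a + c) ^ p = 2 ^ (2 - p) * ((a + c) ^ (p - 1) * (a + c)) := by
          rw [hpow]
      _ = (2 ^ (2 - p) * (a + c) ^ (p - 1)) * (a + c) := by ring
      _ ≤ (2 ^ (2 - p) * (2 ^ (p - 2) * (a ^ (p - 1) + c ^ (p - 1)))) * (a + c) := by
          apply mul_le_mul_of_nonneg_right _ (by positivity)
          apply mul_le_mul_of_nonneg_left h2 (by positivity)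
      _ = (a ^ (p - 1) + c ^ (p - 1)) * (a + c) := by
          rw [← mul_assoc, hcc, one_mul]

private lemma key_half {p : ℝ} (hp : 2 ≤ p) {a b : ℝ} (hba : b ≤ a) :
    2 ^ (2 - p) * |a - b| ^ p ≤ (|a| ^ (p - 2) * a - |b| ^ (p - 2) * b) * (a - b) := by
  rcases le_or_gt 0 (a + b) with h2 | h2
  · exact key_aux hp hba h2
  · have h := key_aux hp (a := -b) (b := -a) (by linarith) (by linarith)
    rw [show (-b) - (-a) = a - b by ring, abs_neg, abs_neg] at h
    have e : (|b| ^ (p - 2) * -b - |a| ^ (p - 2) * -a) * (a - b)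
        = (|a| ^ (p - 2) * a - |b| ^ (p - 2) * b) * (a - b) := by ring
    rwa [e] at h

private lemma key_ineq {p : ℝ} (hp : 2 ≤ p) (a b : ℝ) :
    2 ^ (2 - p) * |a - b| ^ p ≤ (|a| ^ (p - 2) * a - |b| ^ (p - 2) * b) * (a - b) := by
  rcases le_total b a with h | h
  · exact key_half hp h
  · have h' := key_half hp (a := b) (b := a) h
    rw [abs_sub_comm b a] at h'
    have e : (|b| ^ (p - 2) * b - |a| ^ (p - 2) * a) * (b - a)
        = (|a| ^ (p - 2) * a - |b| ^ (p - 2) * b) * (a - b) := by ring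
    rwa [e] at h'

private lemma bound1 {p : ℝ} (hp : 2 ≤ p) (a b : ℝ) :
    |(|a| ^ (p - 2) * a - |b| ^ (p - 2) * b) * (a - b)| ≤ 3 * (|a| ^ p + |b| ^ p) := by
  have hp1 : (1 : ℝ) ≤ p - 1 := by linarith
  set u := |a| with hu
  set v := |b| with hv
  have hu0 : 0 ≤ u := abs_nonneg a
  have hv0 : 0 ≤ v := abs_nonneg b
  have hD : u ^ (p - 1) * u = u ^ p := by
    rw [show p - 1 = p - 1 by ring, rpow_sub_one_mul' hu0 (by linarith : 1 ≤ p)]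
  have hE : v ^ (p - 1) * v = v ^ p := rpow_sub_one_mul' hv0 (by linarith : 1 ≤ p)
  have hB : u ^ (p - 1) * v ≤ u ^ p + v ^ p := by
    rcases le_total u v with h | h
    · have : u ^ (p - 1) * v ≤ v ^ (p - 1) * v :=
        mul_le_mul_of_nonneg_right (Real.rpow_le_rpow hu0 h (by linarith)) hv0
      rw [hE] at this
      have : u ^ (p - 1) * v ≤ v ^ p := this
      nlinarith [Real.rpow_nonneg hu0 p]
    · have : u ^ (p - 1) * v ≤ u ^ (p - 1) * u :=
        mul_le_mul_of_nonneg_left h (Real.rpow_nonneg hu0 _)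
      rw [hD] at this
      nlinarith [Real.rpow_nonneg hv0 p]
  have hC : v ^ (p - 1) * u ≤ u ^ p + v ^ p := by
    rcases le_total v u with h | h
    · have : v ^ (p - 1) * u ≤ u ^ (p - 1) * u :=
        mul_le_mul_of_nonneg_right (Real.rpow_le_rpow hv0 h (by linarith)) hu0
      rw [hD] at this
      nlinarith [Real.rpow_nonneg hv0 p]
    · have : v ^ (p - 1) * u ≤ v ^ (p - 1) * v :=
        mul_le_mul_of_nonneg_left h (Real.rpow_nonneg hv0 _)
      rw [hE] at this
      nlinarith [Real.rpow_nonneg hu0 p]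
  have hA : |(|a| ^ (p - 2) * a - |b| ^ (p - 2) * b) * (a - b)|
      ≤ (u ^ (p - 1) + v ^ (p - 1)) * (u + v) := by
    rw [abs_mul]
    apply mul_le_mul _ (abs_sub a b) (abs_nonneg _) (by positivity)
    calc |(|a| ^ (p - 2) * a - |b| ^ (p - 2) * b)|
        ≤ |(|a| ^ (p - 2) * a)| + |(|b| ^ (p - 2) * b)| := abs_sub _ _
      _ = u ^ (p - 2) * u + v ^ (p - 2) * v := by
          rw [abs_mul, abs_mul, abs_of_nonneg (Real.rpow_nonneg hu0 _),
            abs_of_nonneg (Real.rpow_nonneg hv0 _)]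
      _ = u ^ (p - 1) + v ^ (p - 1) := by
          rw [show p - 2 = (p - 1) - 1 by ring, rpow_sub_one_mul' hu0 hp1,
            rpow_sub_one_mul' hv0 hp1]
  have hexp : (u ^ (p - 1) + v ^ (p - 1)) * (u + v)
      = u ^ p + u ^ (p - 1) * v + v ^ (p - 1) * u + v ^ p := by
    rw [← hD, ← hE]; ring
  rw [hexp] at hA
  linarith

/-- Integrated strong monotonicity of the `p`-Laplace nonlinearity: for `p ≥ 2`
and `f, g` measurable with `∫|f|^p, ∫|g|^p < ∞`, the integrand
`(|f|^{p−2}f − |g|^{p−2}g)(f − g)` is nonnegative and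
`∫(|f|^{p−2}f − |g|^{p−2}g)(f − g) dμ ≥ 2^{2−p} ∫|f−g|^p dμ`. -/
theorem integral_p_laplace_strong_monotonicity
    {X : Type*} [MeasurableSpace X] (μ : Measure X) (p : ℝ) (hp : 2 ≤ p)
    (f g : X → ℝ) (hf : Measurable f) (hg : Measurable g)
    (hfp : ∫⁻ x, ENNReal.ofReal (|f x| ^ p) ∂μ < ⊤)
    (hgp : ∫⁻ x, ENNReal.ofReal (|g x| ^ p) ∂μ < ⊤) :
    (∀ x, 0 ≤ (|f x| ^ (p - 2) * f x - |g x| ^ (p - 2) * g x) * (f x - g x)) ∧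
      ∫ x, (|f x| ^ (p - 2) * f x - |g x| ^ (p - 2) * g x) * (f x - g x) ∂μ ≥
        (2 : ℝ) ^ (2 - p) * ∫ x, |f x - g x| ^ p ∂μ := by
  have hkey : ∀ x, 2 ^ (2 - p) * |f x - g x| ^ p ≤
      (|f x| ^ (p - 2) * f x - |g x| ^ (p - 2) * g x) * (f x - g x) :=
    fun x => key_ineq hp (f x) (g x)
  have hnn : ∀ x, 0 ≤ (|f x| ^ (p - 2) * f x - |g x| ^ (p - 2) * g x) * (f x - g x) :=
    fun x => le_trans (by positivity) (hkey x)
  refine ⟨hnn, ?_⟩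
  -- Integrability of |f|^p and |g|^p
  have intF : Integrable (fun x => |f x| ^ p) μ := by
    refine ⟨(by fun_prop : Measurable fun x => |f x| ^ p).aestronglyMeasurable, ?_⟩
    rw [hasFiniteIntegral_iff_ofReal (Filter.Eventually.of_forall fun x => by positivity)]
    exact hfp
  have intG : Integrable (fun x => |g x| ^ p) μ := by
    refine ⟨(by fun_prop : Measurable fun x => |g x| ^ p).aestronglyMeasurable, ?_⟩
    rw [hasFiniteIntegral_iff_ofReal (Filter.Eventually.of_forall fun x => by positivity)]
    exact hgp
  have intFG : Integrable (fun x => |f x| ^ p + |g x| ^ p) μ := intF.add intG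
  -- Integrability of the main integrand
  have inth : Integrable
      (fun x => (|f x| ^ (p - 2) * f x - |g x| ^ (p - 2) * g x) * (f x - g x)) μ := by
    refine Integrable.mono' (intFG.const_mul 3) ?_ ?_
    · exact (by fun_prop : Measurable fun x =>
        (|f x| ^ (p - 2) * f x - |g x| ^ (p - 2) * g x) * (f x - g x)).aestronglyMeasurable
    · exact Filter.Eventually.of_forall fun x => by
        rw [Real.norm_eq_abs]; exact bound1 hp (f x) (g x)
  -- Integrability of |f - g|^p
  have intfg : Integrable (fun x => |f x - g x| ^ p) μ := by
    refine Integrable.mono' (intFG.const_mul (2 ^ (p - 1))) ?_ ?_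
    · exact (by fun_prop : Measurable fun x => |f x - g x| ^ p).aestronglyMeasurable
    · refine Filter.Eventually.of_forall fun x => ?_
      rw [Real.norm_eq_abs, abs_of_nonneg (by positivity)]
      calc |f x - g x| ^ p ≤ (|f x| + |g x|) ^ p :=
            Real.rpow_le_rpow (abs_nonneg _) (abs_sub _ _) (by linarith)
        _ ≤ 2 ^ (p - 1) * (|f x| ^ p + |g x| ^ p) :=
            convex2' (by linarith) (abs_nonneg _) (abs_nonneg _)
  have hmono : ∫ x, 2 ^ (2 - p) * |f x - g x| ^ p ∂μ ≤
      ∫ x, (|f x| ^ (p - 2) * f x - |g x| ^ (p - 2) * g x) * (f x - g x) ∂μ :=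
    integral_mono (intfg.const_mul _) inth hkey
  rwa [integral_const_mul] at hmono
end

section
/- Let (X, Σ, μ) be a measure space, let p ≥ 2 be a real number, and let f, g : X → ℝ be measurable functions with ∫_X |f|^p dμ < ∞ and ∫_X |g|^p dμ < ∞. Then ∫_X (|f|^{p−2}·f − |g|^{p−2}·g)·(f − g) dμ ≥ (4(p−1)/p^2)·∫_X (|f|^{p/2} − |g|^{p/2})^2 dμ. In particular, if ζ ∈ ℝ satisfies ζ^2 ≤ 4(p−1)/p^2, then ζ^2·∫_X (|f|^{p/2} − |g|^{p/2})^2 dμ ≤ ∫_X (|f|^{p−2}·f − |g|^{p−2}·g)·(f − g) dμ. -/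
open MeasureTheory
open Real Set

private lemma ge_of_deriv {f f' : ℝ → ℝ}
    (hd : ∀ t ∈ Ici (1:ℝ), HasDerivAt f (f' t) t)
    (h0 : ∀ t ∈ Ici (1:ℝ), 0 ≤ f' t) {t : ℝ} (ht : 1 ≤ t) : f 1 ≤ f t := by
  have hmono : MonotoneOn f (Ici 1) := by
    apply monotoneOn_of_deriv_nonneg (convex_Ici 1)
    · exact fun x hx => (hd x hx).continuousAt.continuousWithinAt
    · intro x hx
      rw [interior_Ici] at hx
      exact (hd x (mem_Ici.2 (show (1:ℝ) < x from hx).le)).differentiableAt.differentiableWithinAt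
    · intro x hx
      rw [interior_Ici] at hx
      rw [(hd x (mem_Ici.2 (show (1:ℝ) < x from hx).le)).deriv]
      exact h0 x (mem_Ici.2 (show (1:ℝ) < x from hx).le)
  exact hmono self_mem_Ici ht ht

private lemma hd_rpow {c : ℝ} {x : ℝ} (hx : (1:ℝ) ≤ x) :
    HasDerivAt (fun y : ℝ => y ^ c) (c * x ^ (c - 1)) x :=
  Real.hasDerivAt_rpow_const (Or.inl (by positivity))

private lemma step2 {q r : ℝ} (hq : 1 ≤ q) (hr0 : 0 < r) (hrq : r ≤ q) {t : ℝ} (ht : 1 ≤ t) :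
    r * (t ^ q - 1) ≤ q * (t ^ q - t ^ (q - r)) := by
  have key : ∀ s ∈ Ici (1:ℝ),
      (0:ℝ) ≤ q * (q * s ^ (q-1) - (q - r) * s ^ (q - r - 1)) - r * (q * s ^ (q-1)) := by
    intro s hs
    have h1 : s ^ (q - r - 1) ≤ s ^ (q - 1) :=
      Real.rpow_le_rpow_of_exponent_le hs (by linarith)
    have h2 : (0:ℝ) ≤ q * (q - r) * (s ^ (q-1) - s ^ (q - r - 1)) :=
      mul_nonneg (mul_nonneg (by linarith) (by linarith)) (by linarith)
    linarith [h2]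
  have := ge_of_deriv (f := fun s => q * (s ^ q - s ^ (q - r)) - r * (s ^ q - 1))
    (f' := fun s => q * (q * s ^ (q-1) - (q - r) * s ^ (q - r - 1)) - r * (q * s ^ (q-1)))
    (fun s hs => (((hd_rpow hs).sub (hd_rpow hs)).const_mul q).sub
      (((hd_rpow hs).sub_const 1).const_mul r)) key ht
  simp only [Real.one_rpow] at this
  linarith

private lemma step1 {q r : ℝ} (hq : 1 ≤ q) (hr0 : 0 < r) (hr : r = 2 - q) {t : ℝ} (ht : 1 ≤ t) :
    0 ≤ q * (t ^ (q-1) * (t ^ r - 1)) + r * (t ^ (r-1) * (t ^ q - 1)) - 2*q*r*(t-1) := by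
  subst hr
  have hrq : (2 - q) ≤ q := by linarith
  have key : ∀ s ∈ Ici (1:ℝ), (0:ℝ) ≤
      q * ((q-1) * s ^ (q-2) * (s ^ (2-q) - 1) + s ^ (q-1) * ((2-q) * s ^ ((2-q)-1)))
      + (2-q) * (((2-q)-1) * s ^ ((2-q)-2) * (s ^ q - 1) + s ^ ((2-q)-1) * (q * s ^ (q-1)))
      - 2*q*(2-q) := by
    intro s hs
    have hs0 : (0:ℝ) < s := lt_of_lt_of_le one_pos hs
    have e1 : s ^ (q-1) * s ^ ((2-q)-1) = 1 := by
      rw [← Real.rpow_add hs0]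
      have : q - 1 + (2 - q - 1) = 0 := by ring
      rw [this, Real.rpow_zero]
    have e2 : s ^ ((2-q)-2) * s ^ q = s ^ (q-2) * s ^ (2-q) := by
      rw [← Real.rpow_add hs0, ← Real.rpow_add hs0]; ring_nf
    have e3 : s ^ ((2-q)-2) * s ^ (q-(2-q)) = s ^ (q-2) := by
      rw [← Real.rpow_add hs0]; ring_nf
    have hst := step2 hq hr0 hrq hs
    have hA : (0:ℝ) ≤ s ^ ((2-q)-2) := Real.rpow_nonneg hs0.le _
    have h4 : (2-q) * (s ^ ((2-q)-2) * (s ^ q - 1)) ≤ q * (s ^ (q-2) * (s ^ (2-q) - 1)) := by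
      have h5 := mul_le_mul_of_nonneg_left hst hA
      have e2' : q * (s ^ ((2-q)-2) * s ^ q) = q * (s ^ (q-2) * s ^ (2-q)) := by rw [e2]
      have e3' : q * (s ^ ((2-q)-2) * s ^ (q-(2-q))) = q * s ^ (q-2) := by rw [e3]
      nlinarith [h5, e2', e3']
    have h6 : (0:ℝ) ≤ (q-1) * (q * (s ^ (q-2) * (s ^ (2-q) - 1))
        - (2-q) * (s ^ ((2-q)-2) * (s ^ q - 1))) :=
      mul_nonneg (by linarith) (by linarith)
    have e1' : q * (2-q) * (s ^ (q-1) * s ^ ((2-q)-1)) = q * (2-q) := by rw [e1, mul_one]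
    nlinarith [h6, e1']
  have hderiv : ∀ s ∈ Ici (1:ℝ), HasDerivAt
      (fun y : ℝ => q * (y ^ (q-1) * (y ^ (2-q) - 1)) + (2-q) * (y ^ ((2-q)-1) * (y ^ q - 1))
        - 2*q*(2-q)*(y-1))
      (q * ((q-1) * s ^ ((q-1)-1) * (s ^ (2-q) - 1) + s ^ (q-1) * ((2-q) * s ^ ((2-q)-1)))
      + (2-q) * (((2-q)-1) * s ^ (((2-q)-1)-1) * (s ^ q - 1) + s ^ ((2-q)-1) * (q * s ^ (q-1)))
      - 2*q*(2-q)) s := by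
    intro s hs
    have hq2 := ((hd_rpow (c := q-1) hs).mul ((hd_rpow (c := 2-q) hs).sub_const 1)).const_mul q
    have hr2 := ((hd_rpow (c := (2-q)-1) hs).mul ((hd_rpow (c := q) hs).sub_const 1)).const_mul (2-q)
    have hlin : HasDerivAt (fun y : ℝ => 2*q*(2-q)*(y-1)) (2*q*(2-q)) s := by
      simpa using ((hasDerivAt_id s).sub_const 1).const_mul (2*q*(2-q))
    exact (hq2.add hr2).sub hlin
  have heq1 : q - 1 - 1 = q - 2 := by ring
  have heq2 : (2-q) - 1 - 1 = (2-q) - 2 := by ring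
  rw [heq1, heq2] at hderiv
  have hfin := ge_of_deriv hderiv key ht
  have h1 : q * ((1:ℝ) ^ (q-1) * ((1:ℝ) ^ (2-q) - 1)) + (2-q) * ((1:ℝ) ^ ((2-q)-1) * ((1:ℝ) ^ q - 1))
      - 2*q*(2-q)*((1:ℝ)-1) = 0 := by simp
  simp only [h1] at hfin
  linarith

private lemma step0 {q r : ℝ} (hq : 1 ≤ q) (hr0 : 0 < r) (hr : r = 2 - q) {t : ℝ} (ht : 1 ≤ t) :
    q * r * (t - 1)^2 ≤ (t ^ q - 1) * (t ^ r - 1) := by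
  have key : ∀ s ∈ Ici (1:ℝ), (0:ℝ) ≤
      (q * s ^ (q-1) * (s ^ r - 1) + (s ^ q - 1) * (r * s ^ (r-1))) - q*r*(2*(s-1)) := by
    intro s hs
    have := step1 hq hr0 hr hs
    nlinarith [this]
  have hderiv : ∀ s ∈ Ici (1:ℝ), HasDerivAt
      (fun y : ℝ => (y ^ q - 1) * (y ^ r - 1) - q*r*(y-1)^2)
      ((q * s ^ (q-1) * (s ^ r - 1) + (s ^ q - 1) * (r * s ^ (r-1))) - q*r*(2*(s-1))) s := by
    intro s hs
    have h1 := ((hd_rpow (c := q) hs).sub_const 1).mul ((hd_rpow (c := r) hs).sub_const 1)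
    have h2 : HasDerivAt (fun y : ℝ => q*r*(y-1)^2) (q*r*(2*(s-1))) s := by
      have := (((hasDerivAt_id s).sub_const 1).pow 2).const_mul (q*r)
      simpa [mul_comm, mul_assoc, mul_left_comm] using this
    exact h1.sub h2
  have hfin := ge_of_deriv hderiv key ht
  simp only [Real.one_rpow, sub_self, zero_mul, mul_zero] at hfin
  nlinarith [hfin]

/-- Core inequality: for `x ≥ y ≥ 0` and `q + r = 2`, `0 < r ≤ 1 ≤ q`:
`q r (x - y)² ≤ (x^q - y^q)(x^r - y^r)`. -/
private lemma claimA {q r : ℝ} (hq : 1 ≤ q) (hr0 : 0 < r) (hr : r = 2 - q)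
    {x y : ℝ} (hy : 0 ≤ y) (hxy : y ≤ x) :
    q * r * (x - y)^2 ≤ (x ^ q - y ^ q) * (x ^ r - y ^ r) := by
  rcases eq_or_lt_of_le hy with hy0 | hy0
  · -- y = 0
    subst hr
    rw [← hy0]
    rw [Real.zero_rpow (by linarith), Real.zero_rpow (by linarith)]
    have hx0 : 0 ≤ x := le_trans hy hxy
    have : (x ^ q - 0) * (x ^ (2-q) - 0) = x ^ 2 := by
      rw [sub_zero, sub_zero, ← Real.rpow_add' hx0 (by norm_num), ← Real.rpow_two]
      norm_num
    rw [this, ← hy0] at *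
    have hqr : q * (2 - q) ≤ 1 := by nlinarith
    nlinarith [Real.rpow_nonneg hx0 2, sq_nonneg x, Real.rpow_two x]
  · -- y > 0
    have ht : 1 ≤ x / y := (one_le_div hy0).2 hxy
    have h := step0 hq hr0 hr ht
    have hyne : y ≠ 0 := hy0.ne'
    have e : ∀ c : ℝ, (x / y) ^ c = x ^ c / y ^ c := fun c => Real.div_rpow (le_trans hy hxy) hy c
    rw [e q, e r] at h
    have hyq : (0:ℝ) < y ^ q := Real.rpow_pos_of_pos hy0 q
    have hyr : (0:ℝ) < y ^ r := Real.rpow_pos_of_pos hy0 r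
    have hyqr : y ^ q * y ^ r = y ^ 2 := by
      rw [← Real.rpow_add hy0]
      rw [show q + r = 2 by rw [hr]; ring]
      rw [Real.rpow_two]
    have h2 := mul_le_mul_of_nonneg_left h (le_of_lt (mul_pos hyq hyr))
    have lhs_eq : y ^ q * y ^ r * (q * r * (x / y - 1) ^ 2) = q * r * (x - y)^2 := by
      rw [hyqr]
      field_simp
      try ring
    have rhs_eq : y ^ q * y ^ r * ((x ^ q / y ^ q - 1) * (x ^ r / y ^ r - 1))
        = (x ^ q - y ^ q) * (x ^ r - y ^ r) := by
      field_simp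
      try ring
    rw [lhs_eq, rhs_eq] at h2
    exact h2

private lemma rpow_mul_self {a c d : ℝ} (ha : 0 ≤ a) (hd : 0 < d) (h : c + 1 = d) :
    a ^ c * a = a ^ d := by
  rcases eq_or_lt_of_le ha with ha0 | ha0
  · rw [← ha0, Real.zero_rpow hd.ne', mul_zero]
  · have : a ^ c * a ^ (1:ℝ) = a ^ (c + 1) := (Real.rpow_add ha0 c 1).symm
    rw [Real.rpow_one, h] at this
    exact this

private lemma nnCase {p : ℝ} (hp : 2 ≤ p) {a b : ℝ} (ha : 0 ≤ a) (hb : 0 ≤ b) (hba : b ≤ a) :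
    4*(p-1)/p^2 * (a ^ (p/2) - b ^ (p/2))^2 ≤ (a ^ (p-1) - b ^ (p-1)) * (a - b) := by
  have hp0 : (0:ℝ) < p := by linarith
  have hpne : p ≠ 0 := hp0.ne'
  have hq : 1 ≤ 2*(p-1)/p := by rw [le_div_iff₀ hp0]; linarith
  have hr0 : (0:ℝ) < 2/p := by positivity
  have hr : 2/p = 2 - 2*(p-1)/p := by field_simp; ring
  have hxy : b ^ (p/2) ≤ a ^ (p/2) := Real.rpow_le_rpow hb hba (by positivity)
  have hx : (0:ℝ) ≤ b ^ (p/2) := Real.rpow_nonneg hb _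
  have h := claimA hq hr0 hr hx hxy
  have eaq : (a ^ (p/2)) ^ (2*(p-1)/p) = a ^ (p-1) := by
    rw [← Real.rpow_mul ha]
    congr 1
    field_simp
  have ebq : (b ^ (p/2)) ^ (2*(p-1)/p) = b ^ (p-1) := by
    rw [← Real.rpow_mul hb]
    congr 1
    field_simp
  have ear : (a ^ (p/2)) ^ (2/p) = a := by
    rw [← Real.rpow_mul ha, show p/2*(2/p) = 1 by field_simp, Real.rpow_one]
  have ebr : (b ^ (p/2)) ^ (2/p) = b := by
    rw [← Real.rpow_mul hb, show p/2*(2/p) = 1 by field_simp, Real.rpow_one]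
  have hqr : 2*(p-1)/p * (2/p) = 4*(p-1)/p^2 := by field_simp; ring
  rw [eaq, ebq, ear, ebr, hqr] at h
  exact h

private lemma nnFull {p : ℝ} (hp : 2 ≤ p) {a b : ℝ} (ha : 0 ≤ a) (hb : 0 ≤ b) :
    4*(p-1)/p^2 * (a ^ (p/2) - b ^ (p/2))^2 ≤ (a ^ (p-1) - b ^ (p-1)) * (a - b) := by
  rcases le_total b a with h | h
  · exact nnCase hp ha hb h
  · have := nnCase hp hb ha h
    nlinarith [this]

private lemma hc_le_one {p : ℝ} (hp : 2 ≤ p) : 4*(p-1)/p^2 ≤ 1 := by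
  rw [div_le_one (by positivity)]
  nlinarith

private lemma mixedCase {p : ℝ} (hp : 2 ≤ p) {A B : ℝ} (hA : 0 ≤ A) (hB : 0 ≤ B) :
    4*(p-1)/p^2 * (A ^ (p/2) - B ^ (p/2))^2 ≤ (A ^ (p-1) + B ^ (p-1)) * (A + B) := by
  have hp0 : (0:ℝ) < p := by linarith
  have eA : (A ^ (p/2))^2 = A ^ p := by
    rw [← Real.rpow_natCast (A ^ (p/2)) 2, ← Real.rpow_mul hA]
    norm_num
  have eB : (B ^ (p/2))^2 = B ^ p := by
    rw [← Real.rpow_natCast (B ^ (p/2)) 2, ← Real.rpow_mul hB]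
    norm_num
  have hc := hc_le_one hp
  have hc0 : (0:ℝ) ≤ 4*(p-1)/p^2 := div_nonneg (by linarith) (by positivity)
  have hXY : (0:ℝ) ≤ A ^ (p/2) * B ^ (p/2) :=
    mul_nonneg (Real.rpow_nonneg hA _) (Real.rpow_nonneg hB _)
  have hcross1 : (0:ℝ) ≤ A ^ (p-1) * B := mul_nonneg (Real.rpow_nonneg hA _) hB
  have hcross2 : (0:ℝ) ≤ B ^ (p-1) * A := mul_nonneg (Real.rpow_nonneg hB _) hA
  have hApB : A ^ (p-1) * A = A ^ p := rpow_mul_self hA hp0 (by ring)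
  have hBpB : B ^ (p-1) * B = B ^ p := rpow_mul_self hB hp0 (by ring)
  nlinarith [sq_nonneg (A ^ (p/2) - B ^ (p/2)), sq_nonneg (A ^ (p/2) + B ^ (p/2))]

private lemma pointwise {p : ℝ} (hp : 2 ≤ p) (a b : ℝ) :
    4*(p-1)/p^2 * (|a| ^ (p/2) - |b| ^ (p/2))^2 ≤ (|a| ^ (p-2) * a - |b| ^ (p-2) * b) * (a - b) := by
  have hp1 : (0:ℝ) < p - 1 := by linarith
  have habs : ∀ u : ℝ, |u| ^ (p-2) * u = if 0 ≤ u then |u| ^ (p-1) else -(|u| ^ (p-1)) := by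
    intro u
    rcases le_or_gt 0 u with hu | hu
    · rw [if_pos hu, abs_of_nonneg hu]
      exact rpow_mul_self hu hp1 (by ring)
    · rw [if_neg (not_le.2 hu), abs_of_neg hu]
      have := rpow_mul_self (a := -u) (by linarith) hp1 (c := p - 2) (by ring)
      nlinarith [this]
  rcases le_or_gt 0 a with ha | ha <;> rcases le_or_gt 0 b with hb | hb
  · rw [habs a, habs b, if_pos ha, if_pos hb, abs_of_nonneg ha, abs_of_nonneg hb]
    exact nnFull hp ha hb
  · rw [habs a, habs b, if_pos ha, if_neg (not_le.2 hb), abs_of_nonneg ha, abs_of_neg hb]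
    have := mixedCase hp (A := a) (B := -b) ha (by linarith)
    nlinarith [this]
  · rw [habs a, habs b, if_neg (not_le.2 ha), if_pos hb, abs_of_neg ha, abs_of_nonneg hb]
    have := mixedCase hp (A := -a) (B := b) (by linarith) hb
    nlinarith [this]
  · rw [habs a, habs b, if_neg (not_le.2 ha), if_neg (not_le.2 hb), abs_of_neg ha, abs_of_neg hb]
    have := nnFull hp (a := -a) (b := -b) (by linarith) (by linarith)
    nlinarith [this]

private lemma young_bound {p : ℝ} (hp : 2 ≤ p) {u v : ℝ} (hu : 0 ≤ u) (hv : 0 ≤ v) :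
    u ^ (p-1) * v ≤ u ^ p + v ^ p := by
  have hp0 : (0:ℝ) < p := by linarith
  rcases le_total v u with h | h
  · have h1 : u ^ (p-1) * v ≤ u ^ (p-1) * u :=
      mul_le_mul_of_nonneg_left h (Real.rpow_nonneg hu _)
    rw [rpow_mul_self hu hp0 (by ring)] at h1
    have : (0:ℝ) ≤ v ^ p := Real.rpow_nonneg hv _
    linarith
  · have h1 : u ^ (p-1) ≤ v ^ (p-1) := Real.rpow_le_rpow hu h (by linarith)
    have h2 : u ^ (p-1) * v ≤ v ^ (p-1) * v := mul_le_mul_of_nonneg_right h1 hv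
    rw [rpow_mul_self hv hp0 (by ring)] at h2
    have : (0:ℝ) ≤ u ^ p := Real.rpow_nonneg hu _
    linarith

private lemma phi_bound {p : ℝ} (hp : 2 ≤ p) (a b : ℝ) :
    |(|a| ^ (p-2) * a - |b| ^ (p-2) * b) * (a - b)| ≤ 4 * (|a| ^ p + |b| ^ p) := by
  have hp1 : (0:ℝ) < p - 1 := by linarith
  have htri : ∀ x y : ℝ, |x - y| ≤ |x| + |y| := fun x y => by
    calc |x - y| ≤ |x| + |-y| := by rw [sub_eq_add_neg]; exact abs_add_le x (-y)
      _ = |x| + |y| := by rw [abs_neg]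
  have e1 : ∀ u : ℝ, |(|u| ^ (p-2) * u)| = |u| ^ (p-1) := by
    intro u
    rw [abs_mul, abs_of_nonneg (Real.rpow_nonneg (abs_nonneg u) _)]
    exact rpow_mul_self (abs_nonneg u) hp1 (by ring)
  calc |(|a| ^ (p-2) * a - |b| ^ (p-2) * b) * (a - b)|
      = |(|a| ^ (p-2) * a - |b| ^ (p-2) * b)| * |a - b| := abs_mul _ _
    _ ≤ (|a| ^ (p-1) + |b| ^ (p-1)) * (|a| + |b|) := by
        refine mul_le_mul ?_ (htri a b) (abs_nonneg _) ?_
        · calc |(|a| ^ (p-2) * a - |b| ^ (p-2) * b)|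
              ≤ |(|a| ^ (p-2) * a)| + |(|b| ^ (p-2) * b)| := htri _ _
            _ = |a| ^ (p-1) + |b| ^ (p-1) := by rw [e1 a, e1 b]
        · positivity
    _ ≤ 4 * (|a| ^ p + |b| ^ p) := by
        have h1 := young_bound hp (abs_nonneg a) (abs_nonneg a)
        have h2 := young_bound hp (abs_nonneg a) (abs_nonneg b)
        have h3 := young_bound hp (abs_nonneg b) (abs_nonneg a)
        have h4 := young_bound hp (abs_nonneg b) (abs_nonneg b)
        nlinarith [h1, h2, h3, h4]



/-- For `p ≥ 2` and `f, g` measurable with `∫|f|^p, ∫|g|^p < ∞`: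
`∫(|f|^{p−2}f − |g|^{p−2}g)(f − g) dμ ≥ (4(p−1)/p²) ∫(|f|^{p/2} − |g|^{p/2})² dμ`,
and consequently, if `ζ² ≤ 4(p−1)/p²`, then
`ζ² ∫(|f|^{p/2} − |g|^{p/2})² dμ ≤ ∫(|f|^{p−2}f − |g|^{p−2}g)(f − g) dμ`. -/
theorem integral_p_laplace_monotonicity
    {X : Type*} [MeasurableSpace X] (μ : Measure X) (p : ℝ) (hp : 2 ≤ p)
    (f g : X → ℝ) (hf : Measurable f) (hg : Measurable g)
    (hfp : ∫⁻ x, ENNReal.ofReal (|f x| ^ p) ∂μ < ⊤)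
    (hgp : ∫⁻ x, ENNReal.ofReal (|g x| ^ p) ∂μ < ⊤) :
    (∫ x, (|f x| ^ (p - 2) * f x - |g x| ^ (p - 2) * g x) * (f x - g x) ∂μ ≥
        4 * (p - 1) / p ^ 2 * ∫ x, (|f x| ^ (p / 2) - |g x| ^ (p / 2)) ^ 2 ∂μ) ∧
      ∀ ζ : ℝ, ζ ^ 2 ≤ 4 * (p - 1) / p ^ 2 →
        ζ ^ 2 * ∫ x, (|f x| ^ (p / 2) - |g x| ^ (p / 2)) ^ 2 ∂μ ≤
          ∫ x, (|f x| ^ (p - 2) * f x - |g x| ^ (p - 2) * g x) * (f x - g x) ∂μ := by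
  have hΦmeas : Measurable (fun x => (|f x| ^ (p-2) * f x - |g x| ^ (p-2) * g x) * (f x - g x)) := by
    fun_prop
  have hΨmeas : Measurable (fun x => (|f x| ^ (p/2) - |g x| ^ (p/2))^2) := by fun_prop
  have hIf : Integrable (fun x => |f x| ^ p) μ := by
    refine ⟨(show Measurable fun x => |f x| ^ p by fun_prop).aestronglyMeasurable, ?_⟩
    rw [hasFiniteIntegral_iff_ofReal (ae_of_all _ fun x => Real.rpow_nonneg (abs_nonneg _) p)]
    exact hfp
  have hIg : Integrable (fun x => |g x| ^ p) μ := by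
    refine ⟨(show Measurable fun x => |g x| ^ p by fun_prop).aestronglyMeasurable, ?_⟩
    rw [hasFiniteIntegral_iff_ofReal (ae_of_all _ fun x => Real.rpow_nonneg (abs_nonneg _) p)]
    exact hgp
  have hΨint : Integrable (fun x => (|f x| ^ (p/2) - |g x| ^ (p/2))^2) μ := by
    refine Integrable.mono' ((hIf.const_mul 2).add (hIg.const_mul 2))
      hΨmeas.aestronglyMeasurable (ae_of_all _ fun x => ?_)
    rw [Real.norm_eq_abs, abs_of_nonneg (sq_nonneg _)]
    show (|f x| ^ (p/2) - |g x| ^ (p/2))^2 ≤ 2 * |f x| ^ p + 2 * |g x| ^ p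
    have eA : (|f x| ^ (p/2))^2 = |f x| ^ p := by
      rw [← Real.rpow_natCast (|f x| ^ (p/2)) 2, ← Real.rpow_mul (abs_nonneg _)]
      norm_num
    have eB : (|g x| ^ (p/2))^2 = |g x| ^ p := by
      rw [← Real.rpow_natCast (|g x| ^ (p/2)) 2, ← Real.rpow_mul (abs_nonneg _)]
      norm_num
    nlinarith [sq_nonneg (|f x| ^ (p/2) + |g x| ^ (p/2)), eA, eB]
  have hΦint : Integrable
      (fun x => (|f x| ^ (p-2) * f x - |g x| ^ (p-2) * g x) * (f x - g x)) μ := by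
    refine Integrable.mono' ((hIf.add hIg).const_mul 4)
      hΦmeas.aestronglyMeasurable (ae_of_all _ fun x => ?_)
    rw [Real.norm_eq_abs]
    show _ ≤ 4 * (|f x| ^ p + |g x| ^ p)
    exact phi_bound hp (f x) (g x)
  have hmain : 4*(p-1)/p^2 * ∫ x, (|f x| ^ (p/2) - |g x| ^ (p/2))^2 ∂μ ≤
      ∫ x, (|f x| ^ (p-2) * f x - |g x| ^ (p-2) * g x) * (f x - g x) ∂μ := by
    rw [← integral_const_mul]
    exact integral_mono (hΨint.const_mul _) hΦint (fun x => pointwise hp (f x) (g x))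
  have hΨ0 : 0 ≤ ∫ x, (|f x| ^ (p/2) - |g x| ^ (p/2))^2 ∂μ :=
    integral_nonneg fun x => sq_nonneg _
  exact ⟨hmain, fun ζ hζ => le_trans (mul_le_mul_of_nonneg_right hζ hΨ0) hmain⟩
end

section
/- Let V be a separable real Banach space with continuous dual V*, let H be a real normed space, and let j : V → H be a continuous linear map. Let A : V → V* and suppose there exist real constants α > 1, β ≥ 0, L ≥ 0, f ≥ 0 and K ≥ 0 such that: (hemicontinuity) for all x, y, z ∈ V the map ε ↦ (A(x + εy))(z) is continuous from ℝ to ℝ; (local monotonicity) 2·(A(x) − A(y))(x − y) ≤ L·(1 + ‖y‖_V^α)·(1 + ‖j(y)‖_H^β)·‖j(x − y)‖_H^2 for all x, y ∈ V; (growth) ‖A(x)‖_{V*}^{α/(α−1)} ≤ (f + K·‖x‖_V^α)·(1 + ‖j(x)‖_H^β) for all x ∈ V. Then A is demicontinuous: whenever a sequence (x_n) converges to x in the norm of V, one has (A(x_n))(z) → (A(x))(z) for every z ∈ V, i.e. A(x_n) converges to A(x) in the weak-* topology of V*. -/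
open Filter Topology

/-- Demicontinuity of a hemicontinuous, locally monotone operator with the
growth condition: if `xₙ → x` in norm, then `A xₙ ⇀ A x` in the weak-* sense,
i.e. `(A xₙ) z → (A x) z` for every `z`. -/
theorem demicontinuous_of_hemicontinuous
    {V : Type*} [NormedAddCommGroup V] [NormedSpace ℝ V] [CompleteSpace V]
    [TopologicalSpace.SeparableSpace V]
    {H : Type*} [NormedAddCommGroup H] [NormedSpace ℝ H]
    (j : V →L[ℝ] H) (A : V → V →L[ℝ] ℝ)
    (α β L f K : ℝ) (hα : 1 < α) (hβ : 0 ≤ β) (hL : 0 ≤ L) (hf : 0 ≤ f) (hK : 0 ≤ K)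
    (hemicont : ∀ x y z : V, Continuous fun ε : ℝ => (A (x + ε • y)) z)
    (locmono : ∀ x y : V,
      2 * (A x - A y) (x - y) ≤
        L * (1 + ‖y‖ ^ α) * (1 + ‖j y‖ ^ β) * ‖j (x - y)‖ ^ (2 : ℝ))
    (growth : ∀ x : V, ‖A x‖ ^ (α / (α - 1)) ≤ (f + K * ‖x‖ ^ α) * (1 + ‖j x‖ ^ β)) :
    ∀ (x : ℕ → V) (x₀ : V), Tendsto x atTop (𝓝 x₀) →
      ∀ z : V, Tendsto (fun n => (A (x n)) z) atTop (𝓝 ((A x₀) z)) := by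
  intro x x₀ hx z
  -- a uniform bound on ‖x n‖
  have hbdd : BddAbove (Set.range fun n => ‖x n‖) :=
    (hx.norm).bddAbove_range
  obtain ⟨R₀, hR₀⟩ := hbdd
  set R : ℝ := max R₀ 0 with hRdef
  have hR0 : 0 ≤ R := le_max_right _ _
  have hR : ∀ n, ‖x n‖ ≤ R := fun n =>
    (hR₀ (Set.mem_range_self n)).trans (le_max_left _ _)
  -- a uniform bound on ‖A v‖ whenever ‖v‖ ≤ R
  set B : ℝ := max 1 ((f + K * R ^ α) * (1 + (‖j‖ * R) ^ β)) with hBdef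
  have hp1 : (1:ℝ) ≤ α / (α - 1) := by
    rw [le_div_iff₀ (by linarith)]; linarith
  have hAbd : ∀ v : V, ‖v‖ ≤ R → ‖A v‖ ≤ B := by
    intro v hv
    have hgr := growth v
    have hM : (f + K * ‖v‖ ^ α) * (1 + ‖j v‖ ^ β) ≤
        (f + K * R ^ α) * (1 + (‖j‖ * R) ^ β) := by
      have h1 : ‖v‖ ^ α ≤ R ^ α := Real.rpow_le_rpow (norm_nonneg _) hv (by linarith)
      have h2 : ‖j v‖ ^ β ≤ (‖j‖ * R) ^ β := by
        refine Real.rpow_le_rpow (norm_nonneg _) ?_ hβ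
        exact (j.le_opNorm v).trans (by gcongr)
      gcongr
    have h := hgr.trans hM
    rcases le_or_gt ‖A v‖ 1 with h1 | h1
    · exact h1.trans (le_max_left _ _)
    · calc ‖A v‖ = ‖A v‖ ^ (1:ℝ) := (Real.rpow_one _).symm
        _ ≤ ‖A v‖ ^ (α / (α - 1)) := Real.rpow_le_rpow_of_exponent_le h1.le hp1
        _ ≤ _ := h
        _ ≤ B := le_max_right _ _
  -- the subsequence criterion
  apply tendsto_of_subseq_tendsto
  intro ns hns
  -- Bolzano–Weierstrass on the bounded real sequence
  have hmem : ∀ n, (A (x (ns n))) z ∈ Metric.closedBall (0:ℝ) (B * ‖z‖) := by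
    intro n
    rw [Metric.mem_closedBall, dist_zero_right, Real.norm_eq_abs]
    calc |(A (x (ns n))) z| ≤ ‖A (x (ns n))‖ * ‖z‖ := (A (x (ns n))).le_opNorm z
      _ ≤ B * ‖z‖ := by gcongr; exact hAbd _ (hR _)
  obtain ⟨c, -, φ, hφ, hc⟩ :=
    tendsto_subseq_of_bounded Metric.isBounded_closedBall hmem
  refine ⟨φ, ?_⟩
  -- the sub-subsequence of points
  set Y : ℕ → V := fun n => x (ns (φ n)) with hYdef
  have hY : Tendsto Y atTop (𝓝 x₀) :=
    hx.comp (hns.comp hφ.tendsto_atTop)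
  have hYB : ∀ n, ‖A (Y n)‖ ≤ B := fun n => hAbd _ (hR _)
  have hcY : Tendsto (fun n => (A (Y n)) z) atTop (𝓝 c) := hc
  -- suffices: c = (A x₀) z
  suffices hkey : c = (A x₀) z by
    rw [← hkey]; exact hcY
  -- the key inequality, for every ε
  have key : ∀ ε : ℝ,
      2 * (ε * ((A (x₀ + ε • z)) z) - ε * c) ≤
        L * (1 + ‖x₀ + ε • z‖ ^ α) * (1 + ‖j (x₀ + ε • z)‖ ^ β) *
          (ε ^ 2 * ‖j z‖ ^ 2) := by
    intro ε
    set yv : V := x₀ + ε • z with hyv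
    set C : ℝ := L * (1 + ‖yv‖ ^ α) * (1 + ‖j yv‖ ^ β) with hCdef
    have hmono : ∀ n, 2 * ((A (Y n) - A yv) (Y n - yv)) ≤ C * ‖j (Y n - yv)‖ ^ 2 := by
      intro n
      have := locmono (Y n) yv
      rwa [Real.rpow_two] at this
    -- limits of both sides
    have hsub : Tendsto (fun n => Y n - x₀) atTop (𝓝 0) := by
      simpa using hY.sub (tendsto_const_nhds :
        Tendsto (fun _ : ℕ => x₀) atTop (𝓝 x₀))
    have hnormsub : Tendsto (fun n => ‖Y n - x₀‖) atTop (𝓝 0) := by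
      simpa using hsub.norm
    have hT1 : Tendsto (fun n => (A (Y n)) (Y n - x₀)) atTop (𝓝 0) := by
      apply squeeze_zero_norm (a := fun n => B * ‖Y n - x₀‖)
      · intro n
        calc ‖(A (Y n)) (Y n - x₀)‖ ≤ ‖A (Y n)‖ * ‖Y n - x₀‖ := (A (Y n)).le_opNorm _
          _ ≤ B * ‖Y n - x₀‖ := by gcongr; exact hYB n
      · simpa using hnormsub.const_mul B
    have hT2 : Tendsto (fun n => -ε * ((A (Y n)) z)) atTop (𝓝 (-ε * c)) :=
      hcY.const_mul _
    have hT3 : Tendsto (fun n => (A yv) (Y n - yv)) atTop (𝓝 ((A yv) (x₀ - yv))) :=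
      ((A yv).continuous.tendsto _).comp (hY.sub tendsto_const_nhds)
    have hLHS : Tendsto (fun n => 2 * ((A (Y n) - A yv) (Y n - yv))) atTop
        (𝓝 (2 * (ε * ((A yv) z) - ε * c))) := by
      have heq : ∀ n, (A (Y n) - A yv) (Y n - yv) =
          (A (Y n)) (Y n - x₀) + (-ε * ((A (Y n)) z)) - (A yv) (Y n - yv) := by
        intro n
        have : Y n - yv = (Y n - x₀) + (-ε) • z := by
          rw [hyv]; module
        simp only [ContinuousLinearMap.sub_apply, this, map_add, map_smul,
          smul_eq_mul]
        ring
      simp only [heq]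
      have h0 : (A yv) (x₀ - yv) = -ε * ((A yv) z) := by
        rw [hyv]; simp [map_smul]
      have := ((hT1.add hT2).sub hT3).const_mul 2
      convert this using 2
      rw [h0]; ring
    have hRHS : Tendsto (fun n => C * ‖j (Y n - yv)‖ ^ 2) atTop
        (𝓝 (C * (ε ^ 2 * ‖j z‖ ^ 2))) := by
      have hjlim : Tendsto (fun n => ‖j (Y n - yv)‖) atTop (𝓝 ‖j (x₀ - yv)‖) :=
        (continuous_norm.comp (j.continuous.comp (continuous_id.sub continuous_const))).continuousAt.tendsto.comp
          (hY) |>.congr (fun n => rfl)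
      have h0 : ‖j (x₀ - yv)‖ ^ 2 = ε ^ 2 * ‖j z‖ ^ 2 := by
        rw [hyv]
        have : x₀ - (x₀ + ε • z) = (-ε) • z := by rw [neg_smul]; abel
        rw [this, map_smul, norm_smul]
        simp [mul_pow]
      rw [← h0]
      exact ((hjlim.pow 2).const_mul C)
    exact le_of_tendsto_of_tendsto' hLHS hRHS hmono
  -- bound the constant uniformly for |ε| ≤ 1
  set C₁ : ℝ := L * (1 + (‖x₀‖ + ‖z‖) ^ α) * (1 + (‖j‖ * (‖x₀‖ + ‖z‖)) ^ β) with hC₁def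
  set E : ℝ := C₁ * ‖j z‖ ^ 2 / 2 with hEdef
  have hCbound : ∀ ε : ℝ, |ε| ≤ 1 →
      L * (1 + ‖x₀ + ε • z‖ ^ α) * (1 + ‖j (x₀ + ε • z)‖ ^ β) ≤ C₁ := by
    intro ε hε
    have hn : ‖x₀ + ε • z‖ ≤ ‖x₀‖ + ‖z‖ := by
      calc ‖x₀ + ε • z‖ ≤ ‖x₀‖ + ‖ε • z‖ := norm_add_le _ _
        _ ≤ ‖x₀‖ + ‖z‖ := by
          rw [norm_smul, Real.norm_eq_abs]
          nlinarith [norm_nonneg z, abs_nonneg ε]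
    have h1 : ‖x₀ + ε • z‖ ^ α ≤ (‖x₀‖ + ‖z‖) ^ α :=
      Real.rpow_le_rpow (norm_nonneg _) hn (by linarith)
    have h2 : ‖j (x₀ + ε • z)‖ ^ β ≤ (‖j‖ * (‖x₀‖ + ‖z‖)) ^ β := by
      refine Real.rpow_le_rpow (norm_nonneg _) ?_ hβ
      exact (j.le_opNorm _).trans (by gcongr)
    rw [hC₁def]
    gcongr
  have hC0 : ∀ ε : ℝ, 0 ≤ L * (1 + ‖x₀ + ε • z‖ ^ α) * (1 + ‖j (x₀ + ε • z)‖ ^ β) := by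
    intro ε
    have ha : (0:ℝ) ≤ ‖x₀ + ε • z‖ ^ α := Real.rpow_nonneg (norm_nonneg _) _
    have hb : (0:ℝ) ≤ ‖j (x₀ + ε • z)‖ ^ β := Real.rpow_nonneg (norm_nonneg _) _
    positivity
  -- one-sided bounds
  have hpos : ∀ ε : ℝ, 0 < ε → ε ≤ 1 → (A (x₀ + ε • z)) z ≤ c + ε * E := by
    intro ε h0 h1
    have hk := key ε
    have hC := hCbound ε (by rw [abs_of_pos h0]; exact h1)
    have hC0' := hC0 ε
    have hjz : (0:ℝ) ≤ ‖j z‖ ^ 2 := sq_nonneg _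
    rw [hEdef]
    nlinarith [sq_nonneg ε, mul_le_mul_of_nonneg_right hC (mul_nonneg (sq_nonneg ε) hjz)]
  have hneg : ∀ ε : ℝ, -1 ≤ ε → ε < 0 → c + ε * E ≤ (A (x₀ + ε • z)) z := by
    intro ε h1 h0
    have hk := key ε
    have hC := hCbound ε (by rw [abs_of_neg h0]; linarith)
    have hC0' := hC0 ε
    have hjz : (0:ℝ) ≤ ‖j z‖ ^ 2 := sq_nonneg _
    rw [hEdef]
    nlinarith [sq_nonneg ε, mul_le_mul_of_nonneg_right hC (mul_nonneg (sq_nonneg ε) hjz)]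
  -- take limits ε → 0±
  have hA0 : Tendsto (fun ε : ℝ => (A (x₀ + ε • z)) z) (𝓝 0) (𝓝 ((A x₀) z)) := by
    have := ((hemicont x₀ z z).tendsto 0)
    simpa using this
  have hcE : Tendsto (fun ε : ℝ => c + ε * E) (𝓝 0) (𝓝 c) := by
    have : Tendsto (fun ε : ℝ => c + ε * E) (𝓝 0) (𝓝 (c + 0 * E)) :=
      tendsto_const_nhds.add (tendsto_id.mul tendsto_const_nhds)
    simpa using this
  have hle1 : (A x₀) z ≤ c := by
    refine le_of_tendsto_of_tendsto
      (hA0.mono_left (nhdsWithin_le_nhds (s := Set.Ioi (0:ℝ))))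
      (hcE.mono_left (nhdsWithin_le_nhds (s := Set.Ioi (0:ℝ)))) ?_
    filter_upwards [Ioo_mem_nhdsGT_of_mem (by norm_num : (0:ℝ) ∈ Set.Ico (0:ℝ) 1)]
      with ε hε
    exact hpos ε hε.1 hε.2.le
  have hle2 : c ≤ (A x₀) z := by
    refine le_of_tendsto_of_tendsto
      (hcE.mono_left (nhdsWithin_le_nhds (s := Set.Iio (0:ℝ))))
      (hA0.mono_left (nhdsWithin_le_nhds (s := Set.Iio (0:ℝ)))) ?_
    filter_upwards [Ioo_mem_nhdsLT_of_mem (by norm_num : (0:ℝ) ∈ Set.Ioc (-1:ℝ) 0)]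
      with ε hε
    exact hneg ε hε.1.le hε.2
  linarith
end

section
/- Let V be a real normed space, A a continuous linear functional on V, and x ∈ V. Let α > 1, β ≥ 0, p_0 ≥ β + 2, K ≥ 0, f ≥ 0 and h ≥ 0 be real numbers such that ‖A‖_{V*}^{α/(α−1)} ≤ (f + K·‖x‖_V^α)·(1 + h^β). Then there exists a constant C, depending only on α, β, K and p_0 (and not on x, A, f or h), such that |A(x)| ≤ C·( f + f^{p_0/2} + ‖x‖_V^α + h^β·‖x‖_V^α + (1 + h)^{p_0} ). -/
/-- If a continuous linear functional `A` on a normed space `V` satisfies the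
growth bound `‖A‖^{α/(α−1)} ≤ (f + K‖x‖^α)(1 + h^β)`, then there is a constant
`C` depending only on `α, β, K, p₀` (and not on `V`, `x`, `A`, `f` or `h`) with
`|A x| ≤ C(f + f^{p₀/2} + ‖x‖^α + h^β‖x‖^α + (1 + h)^{p₀})`. -/
theorem pairing_bound_of_growth (α β p₀ K : ℝ)
    (hα : 1 < α) (hβ : 0 ≤ β) (hp₀ : β + 2 ≤ p₀) (hK : 0 ≤ K) :
    ∃ C : ℝ, ∀ (V : Type*) [NormedAddCommGroup V] [NormedSpace ℝ V]
      (A : V →L[ℝ] ℝ) (x : V) (f h : ℝ), 0 ≤ f → 0 ≤ h →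
      ‖A‖ ^ (α / (α - 1)) ≤ (f + K * ‖x‖ ^ α) * (1 + h ^ β) →
      |A x| ≤ C * (f + f ^ (p₀ / 2) + ‖x‖ ^ α + h ^ β * ‖x‖ ^ α + (1 + h) ^ p₀) := by
  refine ⟨K + 2, ?_⟩
  intro V _ _ A x f h hf hh hbound
  set q := α / (α - 1) with hqdef
  have hα0 : (0:ℝ) < α := by linarith
  have hp₀pos : (0:ℝ) < p₀ := by linarith
  have hcon : α.HolderConjugate q := Real.HolderConjugate.conjExponent hα
  have hq1 : 1 < q := hcon.symm.lt
  set a := (f + K * ‖x‖ ^ α) * (1 + h ^ β) with hadef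
  have hxα : (0:ℝ) ≤ ‖x‖ ^ α := Real.rpow_nonneg (norm_nonneg x) α
  have hhβ : (0:ℝ) ≤ h ^ β := Real.rpow_nonneg hh β
  have ha0 : 0 ≤ a := by positivity
  -- ‖A‖ ≤ a ^ (1/q)
  have hA : ‖A‖ ≤ a ^ (1/q) := by
    have h1 : (‖A‖ ^ q) ^ (1/q) ≤ a ^ (1/q) :=
      Real.rpow_le_rpow (Real.rpow_nonneg (norm_nonneg A) q) hbound
        (by positivity)
    rwa [← Real.rpow_mul (norm_nonneg A), mul_one_div, div_self (by positivity : q ≠ 0),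
      Real.rpow_one] at h1
  -- Young's inequality
  have hyoung : a ^ (1/q) * ‖x‖ ≤ a + ‖x‖ ^ α := by
    have h2 := Real.young_inequality_of_nonneg
      (Real.rpow_nonneg ha0 (1/q)) (norm_nonneg x) hcon.symm
    have h3 : (a ^ (1/q)) ^ q = a := by
      rw [← Real.rpow_mul ha0, one_div, inv_mul_cancel₀ (by positivity : q ≠ 0), Real.rpow_one]
    rw [h3] at h2
    have h4 : a / q ≤ a := by
      rw [div_le_iff₀ (by linarith : (0:ℝ) < q)]
      nlinarith
    have h5 : ‖x‖ ^ α / α ≤ ‖x‖ ^ α := by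
      rw [div_le_iff₀ hα0]; nlinarith
    linarith
  have hAx : |A x| ≤ a + ‖x‖ ^ α := by
    calc |A x| = ‖A x‖ := (Real.norm_eq_abs _).symm
    _ ≤ ‖A‖ * ‖x‖ := A.le_opNorm x
    _ ≤ a ^ (1/q) * ‖x‖ := by
        exact mul_le_mul_of_nonneg_right hA (norm_nonneg x)
    _ ≤ a + ‖x‖ ^ α := hyoung
  -- bound f * h^β
  have hfh : f * h ^ β ≤ f + f ^ (p₀/2) + (1 + h) ^ p₀ := by
    have hfp : (0:ℝ) ≤ f ^ (p₀/2) := Real.rpow_nonneg hf _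
    have h1h : (0:ℝ) ≤ (1 + h) ^ p₀ := Real.rpow_nonneg (by linarith) _
    rcases eq_or_lt_of_le hβ with hb0 | hbpos
    · rw [← hb0, Real.rpow_zero]; nlinarith
    · set r := p₀ / (p₀ - β) with hrdef
      set s := p₀ / β with hsdef
      have hpβ : (0:ℝ) < p₀ - β := by linarith
      have hrcon : r.HolderConjugate s := by
        rw [Real.holderConjugate_iff]
        constructor
        · rw [hrdef, lt_div_iff₀ hpβ]; linarith
        · rw [hrdef, hsdef]
          field_simp
          ring
      have hy := Real.young_inequality_of_nonneg hf hhβ hrcon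
      have hhs : (h ^ β) ^ s = h ^ p₀ := by
        rw [← Real.rpow_mul hh, hsdef]
        congr 1
        field_simp
      rw [hhs] at hy
      have hr1 : 1 ≤ r := hrcon.lt.le
      have hfr : f ^ r ≤ f + f ^ (p₀/2) := by
        rcases le_total f 1 with hf1 | hf1
        · rcases eq_or_lt_of_le hf with hf0 | hf0
          · rw [← hf0, Real.zero_rpow hrcon.ne_zero]; positivity
          · have : f ^ r ≤ f ^ (1:ℝ) :=
              Real.rpow_le_rpow_of_exponent_ge hf0 hf1 hr1
            rw [Real.rpow_one] at this
            linarith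
        · have hrp : r ≤ p₀ / 2 := by
            rw [hrdef]
            apply div_le_div_of_nonneg_left hp₀pos.le (by norm_num) (by linarith)
          have : f ^ r ≤ f ^ (p₀/2) := Real.rpow_le_rpow_of_exponent_le hf1 hrp
          linarith
      have hhp : h ^ p₀ ≤ (1 + h) ^ p₀ :=
        Real.rpow_le_rpow hh (by linarith) hp₀pos.le
      have hdr : f ^ r / r ≤ f ^ r :=
        div_le_self (Real.rpow_nonneg hf r) hrcon.lt.le
      have hds : h ^ p₀ / s ≤ h ^ p₀ :=
        div_le_self (Real.rpow_nonneg hh p₀) hrcon.symm.lt.le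
      linarith
  have hfp : (0:ℝ) ≤ f ^ (p₀/2) := Real.rpow_nonneg hf _
  have h1h : (0:ℝ) ≤ (1 + h) ^ p₀ := Real.rpow_nonneg (by linarith) _
  have hexp : a = f + f * h ^ β + K * ‖x‖ ^ α + K * (h ^ β * ‖x‖ ^ α) := by
    rw [hadef]; ring
  rw [hexp] at hAx
  nlinarith [mul_nonneg hhβ hxα, mul_nonneg hK (mul_nonneg hhβ hxα), mul_nonneg hK hxα,
    mul_nonneg hK hf, mul_nonneg hK hfp, mul_nonneg hK h1h]
end

section
/- Let k be a positive integer and, for each i = 1, …, k, let V_i be a real normed space, x_i ∈ V_i an element, and A_i a continuous linear functional on V_i. Let α_i > 1 (i = 1, …, k), β ≥ 0, p_0 ≥ β + 2, θ > 0, K ≥ 0, f ≥ 0 and h ≥ 0 be real numbers, and let S ≥ 0 and G ≥ 0 be real numbers. Assume: (growth) ‖A_i‖_{V_i*}^{α_i/(α_i−1)} ≤ (f + K·‖x_i‖_{V_i}^{α_i})·(1 + h^β) for each i; (coercivity) 2·∑_{i=1}^k A_i(x_i) + (p_0 − 1)·S + θ·∑_{i=1}^k ‖x_i‖_{V_i}^{α_i}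 + G ≤ f + K·h^2. Then there exists a constant C, depending only on k, α_1, …, α_k, β, θ, K and p_0, such that S + G ≤ C·( 1 + f^{p_0/2} + h^{p_0} + ∑_{i=1}^k ‖x_i‖_{V_i}^{α_i} + h^β·∑_{i=1}^k ‖x_i‖_{V_i}^{α_i} ). -/
lemma rpow_le_one_add_rpow {h m n : ℝ} (hh : 0 ≤ h) (hm : 0 ≤ m) (hmn : m ≤ n) :
    h ^ m ≤ 1 + h ^ n := by
  rcases le_or_gt h 1 with h1 | h1
  · have h2 : h ^ m ≤ 1 := Real.rpow_le_one hh h1 hm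
    have h3 : (0:ℝ) ≤ h ^ n := Real.rpow_nonneg hh n
    linarith
  · have h2 := Real.rpow_le_rpow_of_exponent_le h1.le hmn
    linarith

/-- Under the growth conditions on `A_i` and the `p₀`-stochastic coercivity
condition, the quantities `S` (the sum of squared norms of the diffusion
coefficients) and `G` (the jump term) satisfy
`S + G ≤ C(1 + f^{p₀/2} + h^{p₀} + ∑ᵢ‖xᵢ‖^{αᵢ} + h^β ∑ᵢ‖xᵢ‖^{αᵢ})`, where `C`
depends only on `k`, `α₁,…,α_k`, `β`, `θ`, `K` and `p₀`. -/
theorem diffusion_bound_of_coercivity (k : ℕ) (hk : 0 < k)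
    (α : Fin k → ℝ) (hα : ∀ i, 1 < α i) (β θ K p₀ : ℝ)
    (hβ : 0 ≤ β) (hp₀ : β + 2 ≤ p₀) (hθ : 0 < θ) (hK : 0 ≤ K) :
    ∃ C : ℝ, ∀ (V : Fin k → Type*) [∀ i, NormedAddCommGroup (V i)]
      [∀ i, NormedSpace ℝ (V i)]
      (x : ∀ i, V i) (A : ∀ i, V i →L[ℝ] ℝ) (f h S G : ℝ),
      0 ≤ f → 0 ≤ h → 0 ≤ S → 0 ≤ G →
      (∀ i, ‖A i‖ ^ (α i / (α i - 1)) ≤ (f + K * ‖x i‖ ^ (α i)) * (1 + h ^ β)) →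
      2 * (∑ i, (A i) (x i)) + (p₀ - 1) * S + θ * (∑ i, ‖x i‖ ^ (α i)) + G ≤
        f + K * h ^ (2 : ℝ) →
      S + G ≤ C * (1 + f ^ (p₀ / 2) + h ^ p₀ + (∑ i, ‖x i‖ ^ (α i)) +
        h ^ β * ∑ i, ‖x i‖ ^ (α i)) := by
  refine ⟨4 * k + 2 * K + 2, ?_⟩
  intro V _ _ x A f h S G hf hh hS hG hgrow hcoer
  have h2p : (2:ℝ) ≤ p₀ := by linarith
  set Sg : ℝ := ∑ i, ‖x i‖ ^ (α i) with hSg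
  have hSgnn : 0 ≤ Sg := Finset.sum_nonneg fun i _ => Real.rpow_nonneg (norm_nonneg _) _
  have hhβ : 0 ≤ h ^ β := Real.rpow_nonneg hh β
  have hF : 0 ≤ f ^ (p₀ / 2) := Real.rpow_nonneg hf _
  have hH : 0 ≤ h ^ p₀ := Real.rpow_nonneg hh _
  -- per-index bound on ‖A i‖ * ‖x i‖
  have hAx : ∀ i, ‖A i‖ * ‖x i‖ ≤ (f + K * ‖x i‖ ^ (α i)) * (1 + h ^ β) + ‖x i‖ ^ (α i) := by
    intro i
    have h1 : 1 < α i := hα i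
    have hconj : (α i / (α i - 1)).HolderConjugate (α i) := by
      rw [Real.holderConjugate_iff]; constructor
      · rw [lt_div_iff₀ (by linarith)]; linarith
      · rw [inv_div]; field_simp; ring
    have hy := Real.young_inequality_of_nonneg (norm_nonneg (A i)) (norm_nonneg (x i)) hconj
    have hq1 : (1:ℝ) ≤ α i / (α i - 1) := by
      rw [le_div_iff₀ (by linarith)]; linarith
    have hd1 : ‖A i‖ ^ (α i / (α i - 1)) / (α i / (α i - 1)) ≤ ‖A i‖ ^ (α i / (α i - 1)) :=
      div_le_self (Real.rpow_nonneg (norm_nonneg _) _) hq1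
    have hd2 : ‖x i‖ ^ (α i) / (α i) ≤ ‖x i‖ ^ (α i) :=
      div_le_self (Real.rpow_nonneg (norm_nonneg _) _) h1.le
    have := hgrow i
    linarith
  -- bound the pairing sum from below
  have hexpand : ∑ i, ((f + K * ‖x i‖ ^ (α i)) * (1 + h ^ β) + ‖x i‖ ^ (α i))
      = (k:ℝ) * f * (1 + h ^ β) + K * (1 + h ^ β) * Sg + Sg := by
    calc ∑ i, ((f + K * ‖x i‖ ^ (α i)) * (1 + h ^ β) + ‖x i‖ ^ (α i))
        = ∑ i, (f * (1 + h ^ β) + (K * (1 + h ^ β) + 1) * ‖x i‖ ^ (α i)) := by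
          refine Finset.sum_congr rfl fun i _ => by ring
      _ = (k:ℝ) * (f * (1 + h ^ β)) + (K * (1 + h ^ β) + 1) * Sg := by
          rw [Finset.sum_add_distrib, Finset.sum_const, Finset.card_univ, Fintype.card_fin,
            nsmul_eq_mul, ← Finset.mul_sum, hSg]
      _ = (k:ℝ) * f * (1 + h ^ β) + K * (1 + h ^ β) * Sg + Sg := by ring
  have hsumA : -((k:ℝ) * f * (1 + h ^ β) + K * (1 + h ^ β) * Sg + Sg) ≤ ∑ i, (A i) (x i) := by
    have h1 : ∀ i ∈ Finset.univ, -((f + K * ‖x i‖ ^ (α i)) * (1 + h ^ β) + ‖x i‖ ^ (α i))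
        ≤ (A i) (x i) := by
      intro i _
      have h2 : |(A i) (x i)| ≤ ‖A i‖ * ‖x i‖ := by
        simpa [Real.norm_eq_abs] using (A i).le_opNorm (x i)
      have h3 := hAx i
      have h4 := neg_abs_le ((A i) (x i))
      linarith
    have h5 := Finset.sum_le_sum h1
    rw [Finset.sum_neg_distrib, hexpand] at h5
    exact h5
  -- scalar bounds
  have hb1 : f ≤ 1 + f ^ (p₀ / 2) := by
    have := rpow_le_one_add_rpow hf zero_le_one (by linarith : (1:ℝ) ≤ p₀ / 2)
    simpa using this
  have hb2 : h ^ (2:ℝ) ≤ 1 + h ^ p₀ := rpow_le_one_add_rpow hh (by norm_num) h2p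
  have hb3 : f * h ^ β ≤ 1 + f ^ (p₀ / 2) + h ^ p₀ := by
    rcases eq_or_lt_of_le h2p with h2 | h2
    · have hβ0 : β = 0 := by linarith
      subst hβ0
      rw [Real.rpow_zero, mul_one]
      have hfe : f ^ (p₀ / 2) = f := by rw [← h2]; norm_num
      linarith
    · have hconj : (p₀ / 2).HolderConjugate (p₀ / (p₀ - 2)) := by
        rw [Real.holderConjugate_iff]; constructor
        · linarith
        · rw [inv_div, inv_div]
          field_simp; ring
      have hy := Real.young_inequality_of_nonneg hf hhβ hconj
      have he : (h ^ β) ^ (p₀ / (p₀ - 2)) = h ^ (β * (p₀ / (p₀ - 2))) := by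
        rw [← Real.rpow_mul hh]
      have hexp : β * (p₀ / (p₀ - 2)) ≤ p₀ := by
        rw [mul_div_assoc', div_le_iff₀ (by linarith)]
        nlinarith
      have hexp0 : 0 ≤ β * (p₀ / (p₀ - 2)) :=
        mul_nonneg hβ (div_nonneg (by linarith) (by linarith))
      have h5 : h ^ (β * (p₀ / (p₀ - 2))) ≤ 1 + h ^ p₀ := rpow_le_one_add_rpow hh hexp0 hexp
      have hd1 : f ^ (p₀ / 2) / (p₀ / 2) ≤ f ^ (p₀ / 2) :=
        div_le_self hF (by linarith)
      have hd2 : (h ^ β) ^ (p₀ / (p₀ - 2)) / (p₀ / (p₀ - 2)) ≤ (h ^ β) ^ (p₀ / (p₀ - 2)) :=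
        div_le_self (Real.rpow_nonneg hhβ _) (by rw [le_div_iff₀ (by linarith)]; linarith)
      rw [he] at hd2
      rw [he] at hy
      linarith
  -- combine
  have hk1 : (1:ℝ) ≤ (k:ℝ) := by exact_mod_cast hk
  have hS2 : S ≤ (p₀ - 1) * S := le_mul_of_one_le_left hS (by linarith)
  have hthSg : 0 ≤ θ * Sg := mul_nonneg hθ.le hSgnn
  have key : S + G ≤ f + K * h ^ (2:ℝ) +
      2 * ((k:ℝ) * f * (1 + h ^ β) + K * (1 + h ^ β) * Sg + Sg) := by
    linarith [hsumA, hcoer, hthSg, hS2]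
  have hc1 : (k:ℝ) * f ≤ (k:ℝ) * (1 + f ^ (p₀/2)) :=
    mul_le_mul_of_nonneg_left hb1 (by positivity)
  have hc2 : (k:ℝ) * (f * h ^ β) ≤ (k:ℝ) * (1 + f ^ (p₀/2) + h ^ p₀) :=
    mul_le_mul_of_nonneg_left hb3 (by positivity)
  have hc3 : K * h ^ (2:ℝ) ≤ K * (1 + h ^ p₀) := mul_le_mul_of_nonneg_left hb2 hK
  linarith [key, hb1, hc1, hc2, hc3, mul_nonneg hK hSgnn, mul_nonneg hK (mul_nonneg hhβ hSgnn),
    mul_nonneg hK hF, mul_nonneg hK hH, mul_nonneg (Nat.cast_nonneg k : (0:ℝ) ≤ k) hSgnn,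
    mul_nonneg (Nat.cast_nonneg k : (0:ℝ) ≤ k) (mul_nonneg hhβ hSgnn),
    mul_nonneg (Nat.cast_nonneg k : (0:ℝ) ≤ k) hF,
    mul_nonneg (Nat.cast_nonneg k : (0:ℝ) ≤ k) hH,
    mul_nonneg hhβ hSgnn, hk1, hF, hH, hSgnn, hhβ, hS, hG]
end
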